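/- arXiv:0908.3577 — 5 statements merged into one kernel-verified Lean document; each statement's English description precedes it below -/
import Mathlib

section
/- Let A be a non-unital Banach algebra and A# its unitization. If A# is approximately 2n-weakly amenable, then A is approximately 2n-weakly amenable. -/
open ContinuousLinearMap Filter Topology

open ContinuousLinearMap Filter Topology

/-- A Banach `A`-bimodule: a complete normed `ℂ`-space with commuting continuous
left and right `A`-actions, jointly bounded and bilinear. -/
structure BBimod (A : Type) [NonUnitalNormedRing A] [NormedSpace ℂ A] where
  carrier : Type
  [grp : NormedAddCommGroup carrier]
  [mod : NormedSpace ℂ carrier]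
  [complete : CompleteSpace carrier]
  lsmul : A → carrier →L[ℂ] carrier
  rsmul : A → carrier →L[ℂ] carrier
  lsmul_add : ∀ a b, lsmul (a + b) = lsmul a + lsmul b
  rsmul_add : ∀ a b, rsmul (a + b) = rsmul a + rsmul b
  lsmul_smul : ∀ (c : ℂ) (a), lsmul (c • a) = c • lsmul a
  rsmul_smul : ∀ (c : ℂ) (a), rsmul (c • a) = c • rsmul a
  lsmul_mul : ∀ a b, lsmul (a * b) = (lsmul a).comp (lsmul b)
  rsmul_mul : ∀ a b, rsmul (a * b) = (rsmul b).comp (rsmul a)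
  lsmul_rsmul : ∀ a b, (lsmul a).comp (rsmul b) = (rsmul b).comp (lsmul a)
  bound : ∃ C : ℝ, ∀ a, ‖lsmul a‖ ≤ C * ‖a‖ ∧ ‖rsmul a‖ ≤ C * ‖a‖

attribute [instance] BBimod.grp BBimod.mod BBimod.complete

variable {A : Type} [NonUnitalNormedRing A] [NormedSpace ℂ A]

/-- The dual of a Banach bimodule, with the canonical dual actions
`⟨u, Λ·a⟩ = ⟨a·u, Λ⟩` and `⟨u, a·Λ⟩ = ⟨u·a, Λ⟩`. -/
noncomputable def BBimod.dual (M : BBimod A) : BBimod A where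
  carrier := M.carrier →L[ℂ] ℂ
  lsmul a := (compL ℂ M.carrier M.carrier ℂ).flip (M.rsmul a)
  rsmul a := (compL ℂ M.carrier M.carrier ℂ).flip (M.lsmul a)
  lsmul_add a b := by ext Λ x; simp [M.rsmul_add]
  rsmul_add a b := by ext Λ x; simp [M.lsmul_add]
  lsmul_smul c a := by ext Λ x; simp [M.rsmul_smul]
  rsmul_smul c a := by ext Λ x; simp [M.lsmul_smul]
  lsmul_mul a b := by ext Λ x; simp [M.rsmul_mul]
  rsmul_mul a b := by ext Λ x; simp [M.lsmul_mul]
  lsmul_rsmul a b := by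
    ext Λ x
    have h : M.lsmul b (M.rsmul a x) = M.rsmul a (M.lsmul b x) := by
      have := congrArg (fun T : M.carrier →L[ℂ] M.carrier => T x) (M.lsmul_rsmul b a)
      simpa using this
    simp [h]
  bound := by
    obtain ⟨C, hC⟩ := M.bound
    refine ⟨C, fun a => ⟨?_, ?_⟩⟩
    · refine opNorm_le_bound _ ?_ fun Λ => ?_
      · exact le_trans (norm_nonneg _) (hC a).2
      · calc ‖Λ.comp (M.rsmul a)‖ ≤ ‖Λ‖ * ‖M.rsmul a‖ := opNorm_comp_le _ _
          _ ≤ (C * ‖a‖) * ‖Λ‖ := by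
              rw [mul_comm]
              exact mul_le_mul_of_nonneg_right (hC a).2 (norm_nonneg _)
    · refine opNorm_le_bound _ ?_ fun Λ => ?_
      · exact le_trans (norm_nonneg _) (hC a).1
      · calc ‖Λ.comp (M.lsmul a)‖ ≤ ‖Λ‖ * ‖M.lsmul a‖ := opNorm_comp_le _ _
          _ ≤ (C * ‖a‖) * ‖Λ‖ := by
              rw [mul_comm]
              exact mul_le_mul_of_nonneg_right (hC a).1 (norm_nonneg _)

variable (A) [IsScalarTower ℂ A A] [SMulCommClass ℂ A A] [CompleteSpace A]

/-- `A` as a Banach bimodule over itself. -/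
noncomputable def BBimod.base : BBimod A where
  carrier := A
  lsmul a := ContinuousLinearMap.mul ℂ A a
  rsmul a := (ContinuousLinearMap.mul ℂ A).flip a
  lsmul_add a b := by ext x; simp [add_mul]
  rsmul_add a b := by ext x; simp [mul_add]
  lsmul_smul c a := by ext x; simp [smul_mul_assoc]
  rsmul_smul c a := by ext x; simp [mul_smul_comm]
  lsmul_mul a b := by ext x; simp [mul_assoc]
  rsmul_mul a b := by ext x; simp [mul_assoc]
  lsmul_rsmul a b := by ext x; simp [mul_assoc]
  bound := by
    refine ⟨1, fun a => ⟨?_, ?_⟩⟩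
    · simpa using ContinuousLinearMap.opNorm_mul_apply_le ℂ A a
    · refine le_trans (opNorm_le_bound _ (norm_nonneg a) fun x => ?_) (by simp)
      simpa [mul_comm] using norm_mul_le x a


/-- The `n`-th dual `A^(n)` of `A` as a Banach `A`-bimodule. -/
noncomputable def iterDual : ℕ → BBimod A
  | 0 => BBimod.base A
  | n + 1 => (iterDual n).dual

variable {A}

/-- `D` is a derivation from `A` into the Banach bimodule `M`. -/
def IsDerivation (M : BBimod A) (D : A →L[ℂ] M.carrier) : Prop :=
  ∀ a b : A, D (a * b) = M.lsmul a (D b) + M.rsmul b (D a)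

/-- `D` is an inner derivation. -/
def IsInner (M : BBimod A) (D : A →L[ℂ] M.carrier) : Prop :=
  ∃ x : M.carrier, ∀ a : A, D a = M.lsmul a x - M.rsmul a x

/-- `D` is approximately inner: there is a net `(x_i)` in `M` with
`D a = lim_i (a·x_i − x_i·a)` for every `a`. -/
def IsApproxInner (M : BBimod A) (D : A →L[ℂ] M.carrier) : Prop :=
  ∃ (ι : Type) (l : Filter ι) (x : ι → M.carrier), l.NeBot ∧
    ∀ a : A, Tendsto (fun i => M.lsmul a (x i) - M.rsmul a (x i)) l (𝓝 (D a))

variable (A)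

/-- `A` is weakly amenable. -/
def WeaklyAmenable : Prop :=
  ∀ D : A →L[ℂ] (iterDual A 1).carrier, IsDerivation (iterDual A 1) D → IsInner (iterDual A 1) D

/-- `A` is approximately `n`-weakly amenable. -/
def ApproxNWeaklyAmenable (n : ℕ) : Prop :=
  ∀ D : A →L[ℂ] (iterDual A n).carrier,
    IsDerivation (iterDual A n) D → IsApproxInner (iterDual A n) D

/-- `A` is `n`-weakly amenable. -/
def NWeaklyAmenable (n : ℕ) : Prop :=
  ∀ D : A →L[ℂ] (iterDual A n).carrier,
    IsDerivation (iterDual A n) D → IsInner (iterDual A n) D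

/-- `A` is approximately weakly amenable. -/
def ApproxWeaklyAmenable : Prop := ApproxNWeaklyAmenable A 1

/-- `A` is approximately amenable: every continuous derivation into the dual of a
Banach `A`-bimodule is approximately inner. -/
def ApproxAmenable : Prop :=
  ∀ (X : BBimod A) (D : A →L[ℂ] X.dual.carrier), IsDerivation X.dual D → IsApproxInner X.dual D
variable (A : Type) [NonUnitalNormedRing A] [NormedSpace ℂ A]
  [IsScalarTower ℂ A A] [SMulCommClass ℂ A A] [CompleteSpace A]

/-! ### Auxiliary machinery for the unitization theorem -/

section AuxAdjoint

/-- The Banach-space adjoint of a continuous linear map. -/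
noncomputable def adjCLM {X Y : Type} [NormedAddCommGroup X] [NormedSpace ℂ X]
    [NormedAddCommGroup Y] [NormedSpace ℂ Y] (u : X →L[ℂ] Y) :
    (Y →L[ℂ] ℂ) →L[ℂ] (X →L[ℂ] ℂ) :=
  (compL ℂ X Y ℂ).flip u

@[simp] lemma adjCLM_apply {X Y : Type} [NormedAddCommGroup X] [NormedSpace ℂ X]
    [NormedAddCommGroup Y] [NormedSpace ℂ Y] (u : X →L[ℂ] Y) (Λ : Y →L[ℂ] ℂ) (x : X) :
    adjCLM u Λ x = Λ (u x) := rfl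

variable {R S : Type} [NonUnitalNormedRing R] [NormedSpace ℂ R]
  [NonUnitalNormedRing S] [NormedSpace ℂ S]

/-- `u` intertwines the actions of `r` and `s` exactly. -/
def ExactPair (X : BBimod R) (Y : BBimod S) (u : X.carrier →L[ℂ] Y.carrier)
    (r : R) (s : S) : Prop :=
  (∀ x, u (X.lsmul r x) = Y.lsmul s (u x)) ∧ (∀ x, u (X.rsmul r x) = Y.rsmul s (u x))

/-- `u` intertwines the actions of `r` and `s` up to an error which is the same on
the left and on the right. -/
def BalPair (X : BBimod R) (Y : BBimod S) (u : X.carrier →L[ℂ] Y.carrier)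
    (r : R) (s : S) : Prop :=
  ∀ x, u (X.lsmul r x) - Y.lsmul s (u x) = u (X.rsmul r x) - Y.rsmul s (u x)

lemma exact_adj {X : BBimod R} {Y : BBimod S} {u : X.carrier →L[ℂ] Y.carrier} {r : R} {s : S}
    (h : ExactPair X Y u r s) : ExactPair Y.dual X.dual (adjCLM u) s r := by
  constructor
  · change ∀ Λ : Y.carrier →L[ℂ] ℂ,
      adjCLM u (adjCLM (Y.rsmul s) Λ) = adjCLM (X.rsmul r) (adjCLM u Λ)
    intro Λ; ext x
    simp only [adjCLM_apply]
    rw [h.2 x]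
  · change ∀ Λ : Y.carrier →L[ℂ] ℂ,
      adjCLM u (adjCLM (Y.lsmul s) Λ) = adjCLM (X.lsmul r) (adjCLM u Λ)
    intro Λ; ext x
    simp only [adjCLM_apply]
    rw [h.1 x]

lemma bal_adj {X : BBimod R} {Y : BBimod S} {u : X.carrier →L[ℂ] Y.carrier} {r : R} {s : S}
    (h : BalPair X Y u r s) : BalPair Y.dual X.dual (adjCLM u) s r := by
  change ∀ Λ : Y.carrier →L[ℂ] ℂ,
      adjCLM u (adjCLM (Y.rsmul s) Λ) - adjCLM (X.rsmul r) (adjCLM u Λ)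
    = adjCLM u (adjCLM (Y.lsmul s) Λ) - adjCLM (X.lsmul r) (adjCLM u Λ)
  intro Λ; ext x
  simp only [ContinuousLinearMap.sub_apply, adjCLM_apply]
  rw [← map_sub Λ, ← map_sub Λ]
  congr 1
  have h' := h x
  have e1 : Y.rsmul s (u x) - u (X.rsmul r x) = -(u (X.rsmul r x) - Y.rsmul s (u x)) :=
    (neg_sub _ _).symm
  have e2 : Y.lsmul s (u x) - u (X.lsmul r x) = -(u (X.lsmul r x) - Y.lsmul s (u x)) :=
    (neg_sub _ _).symm
  rw [e1, e2, h']

end AuxAdjoint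

section AuxUnitization

/-- The canonical isometric inclusion `A → A♯`. -/
noncomputable def inclA : A →L[ℂ] WithLp 1 (Unitization ℂ A) :=
  LinearMap.mkContinuous
    ((WithLp.linearEquiv 1 ℂ (Unitization ℂ A)).symm.toLinearMap.comp (Unitization.inrHom ℂ ℂ A))
    1 (fun a => by
      simpa using le_of_eq (WithLp.unitization_norm_inr (𝕜 := ℂ) a))

/-- The canonical contractive linear projection `A♯ → A` (not a module map). -/
noncomputable def projA : WithLp 1 (Unitization ℂ A) →L[ℂ] A :=
  LinearMap.mkContinuous
    ((Unitization.sndHom ℂ ℂ A).comp (WithLp.linearEquiv 1 ℂ (Unitization ℂ A)).toLinearMap)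
    1 (fun x => by
      rw [one_mul, WithLp.unitization_norm_def]
      exact le_add_of_nonneg_left (norm_nonneg _))

@[simp] lemma inclA_apply (a : A) :
    inclA A a = (WithLp.equiv 1 (Unitization ℂ A)).symm (a : Unitization ℂ A) := rfl

@[simp] lemma projA_apply (x : WithLp 1 (Unitization ℂ A)) :
    projA A x = ((WithLp.equiv 1 (Unitization ℂ A)) x).snd := rfl

lemma projA_inclA (a : A) : projA A (inclA A a) = a := by
  simp

lemma inclA_mul (a b : A) : inclA A a * inclA A b = inclA A (a * b) := by
  apply (WithLp.equiv 1 (Unitization ℂ A)).injective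
  simp [WithLp.unitization_mul]

/-- The chain of maps `J_k : A^(k) → (A♯)^(k)` and `P_k : (A♯)^(k) → A^(k)`,
obtained from the inclusion and projection by taking iterated adjoints. -/
noncomputable def JPd : ∀ k : ℕ,
    ((iterDual A k).carrier →L[ℂ] (iterDual (WithLp 1 (Unitization ℂ A)) k).carrier) ×
    ((iterDual (WithLp 1 (Unitization ℂ A)) k).carrier →L[ℂ] (iterDual A k).carrier)
  | 0 => (inclA A, projA A)
  | (k + 1) => (adjCLM (JPd k).2, adjCLM (JPd k).1)

lemma JPd_leftInv : ∀ (k : ℕ) (x : (iterDual A k).carrier), (JPd A k).2 ((JPd A k).1 x) = x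
  | 0 => by
    intro x
    exact projA_inclA A x
  | (k + 1) => by
    change ∀ x : (iterDual A k).carrier →L[ℂ] ℂ,
      adjCLM (JPd A k).1 (adjCLM (JPd A k).2 x) = x
    intro x; ext y
    simp only [adjCLM_apply]
    rw [JPd_leftInv k y]

lemma iter_one (k : ℕ) :
    (∀ ξ, (iterDual (WithLp 1 (Unitization ℂ A)) k).lsmul 1 ξ = ξ) ∧
    (∀ ξ, (iterDual (WithLp 1 (Unitization ℂ A)) k).rsmul 1 ξ = ξ) := by
  induction k with
  | zero =>
    constructor
    · change ∀ ξ : WithLp 1 (Unitization ℂ A), (1 : WithLp 1 (Unitization ℂ A)) * ξ = ξ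
      exact fun ξ => one_mul ξ
    · change ∀ ξ : WithLp 1 (Unitization ℂ A), ξ * (1 : WithLp 1 (Unitization ℂ A)) = ξ
      exact fun ξ => mul_one ξ
  | succ k ih =>
    constructor
    · change ∀ ξ : (iterDual (WithLp 1 (Unitization ℂ A)) k).carrier →L[ℂ] ℂ,
        adjCLM ((iterDual (WithLp 1 (Unitization ℂ A)) k).rsmul 1) ξ = ξ
      intro ξ; ext x
      simp only [adjCLM_apply]
      rw [ih.2 x]
    · change ∀ ξ : (iterDual (WithLp 1 (Unitization ℂ A)) k).carrier →L[ℂ] ℂ,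
        adjCLM ((iterDual (WithLp 1 (Unitization ℂ A)) k).lsmul 1) ξ = ξ
      intro ξ; ext x
      simp only [adjCLM_apply]
      rw [ih.1 x]

lemma exactJ0 (a : A) :
    ExactPair (iterDual A 0) (iterDual (WithLp 1 (Unitization ℂ A)) 0) (JPd A 0).1
      a (inclA A a) := by
  constructor
  · change ∀ x : A, inclA A (a * x) = inclA A a * inclA A x
    exact fun x => (inclA_mul A a x).symm
  · change ∀ x : A, inclA A (x * a) = inclA A x * inclA A a
    exact fun x => (inclA_mul A x a).symm

lemma balP0 (a : A) :
    BalPair (iterDual (WithLp 1 (Unitization ℂ A)) 0) (iterDual A 0) (JPd A 0).2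
      (inclA A a) a := by
  change ∀ y : WithLp 1 (Unitization ℂ A),
    projA A (inclA A a * y) - a * projA A y = projA A (y * inclA A a) - projA A y * a
  intro y
  simp only [projA_apply, WithLp.equiv_apply, WithLp.equiv_symm_apply, WithLp.ofLp_toLp,
    WithLp.unitization_mul, Unitization.snd_mul,
    Equiv.apply_symm_apply, inclA_apply, Unitization.fst_inr, Unitization.snd_inr,
    zero_smul, zero_add, add_zero]
  abel

lemma JPd_spec (a : A) (m : ℕ) :
    ExactPair (iterDual A (2 * m)) (iterDual (WithLp 1 (Unitization ℂ A)) (2 * m))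
      (JPd A (2 * m)).1 a (inclA A a) ∧
    BalPair (iterDual (WithLp 1 (Unitization ℂ A)) (2 * m)) (iterDual A (2 * m))
      (JPd A (2 * m)).2 (inclA A a) a := by
  induction m with
  | zero => exact ⟨exactJ0 A a, balP0 A a⟩
  | succ m ih => exact ⟨exact_adj (exact_adj ih.1), bal_adj (bal_adj ih.2)⟩

lemma decompA (x : WithLp 1 (Unitization ℂ A)) :
    x = ((WithLp.equiv 1 (Unitization ℂ A)) x).fst • (1 : WithLp 1 (Unitization ℂ A))
      + inclA A (projA A x) := by
  apply (WithLp.equiv 1 (Unitization ℂ A)).injective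
  simp only [WithLp.equiv_apply, WithLp.ofLp_add, WithLp.ofLp_smul, inclA_apply, projA_apply,
    WithLp.equiv_symm_apply, WithLp.ofLp_toLp, Equiv.apply_symm_apply]
  have hone : WithLp.ofLp (1 : WithLp 1 (Unitization ℂ A)) = 1 := rfl
  apply Unitization.ext <;> simp [hone]

lemma lsmul_decompA (k : ℕ) (x : WithLp 1 (Unitization ℂ A))
    (ξ : (iterDual (WithLp 1 (Unitization ℂ A)) k).carrier) :
    (iterDual (WithLp 1 (Unitization ℂ A)) k).lsmul x ξ
      = ((WithLp.equiv 1 (Unitization ℂ A)) x).fst • ξ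
        + (iterDual (WithLp 1 (Unitization ℂ A)) k).lsmul (inclA A (projA A x)) ξ := by
  conv_lhs => rw [decompA A x]
  rw [(iterDual (WithLp 1 (Unitization ℂ A)) k).lsmul_add, ContinuousLinearMap.add_apply,
    (iterDual (WithLp 1 (Unitization ℂ A)) k).lsmul_smul, ContinuousLinearMap.smul_apply,
    (iter_one A k).1 ξ]

lemma rsmul_decompA (k : ℕ) (x : WithLp 1 (Unitization ℂ A))
    (ξ : (iterDual (WithLp 1 (Unitization ℂ A)) k).carrier) :
    (iterDual (WithLp 1 (Unitization ℂ A)) k).rsmul x ξ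
      = ((WithLp.equiv 1 (Unitization ℂ A)) x).fst • ξ
        + (iterDual (WithLp 1 (Unitization ℂ A)) k).rsmul (inclA A (projA A x)) ξ := by
  conv_lhs => rw [decompA A x]
  rw [(iterDual (WithLp 1 (Unitization ℂ A)) k).rsmul_add, ContinuousLinearMap.add_apply,
    (iterDual (WithLp 1 (Unitization ℂ A)) k).rsmul_smul, ContinuousLinearMap.smul_apply,
    (iter_one A k).2 ξ]

end AuxUnitization

/-- If the unitization `A#` of a non-unital Banach algebra `A` is approximately
`2n`-weakly amenable, then so is `A`. -/
theorem approx2nWeaklyAmenable_of_unitization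
    (hnu : ¬ ∃ e : A, ∀ a : A, e * a = a ∧ a * e = a)
    (n : ℕ) (hn : 1 ≤ n)
    (h : ApproxNWeaklyAmenable (WithLp 1 (Unitization ℂ A)) (2 * n)) :
    ApproxNWeaklyAmenable A (2 * n) := by
  intro D hD
  -- Extend `D` to a derivation on the unitization
  have hD' : IsDerivation (iterDual (WithLp 1 (Unitization ℂ A)) (2 * n))
      ((((JPd A (2 * n)).1).comp D).comp (projA A)) := by
    intro x y
    have hxy : projA A (x * y)
        = ((WithLp.equiv 1 (Unitization ℂ A)) x).fst • projA A y
          + ((WithLp.equiv 1 (Unitization ℂ A)) y).fst • projA A x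
          + projA A x * projA A y := by
      show ((WithLp.equiv 1 (Unitization ℂ A)) (x * y)).snd = _
      rw [WithLp.equiv_apply, WithLp.unitization_mul, Unitization.snd_mul]
      rfl
    show (JPd A (2 * n)).1 (D (projA A (x * y)))
      = (iterDual (WithLp 1 (Unitization ℂ A)) (2 * n)).lsmul x
          ((JPd A (2 * n)).1 (D (projA A y)))
        + (iterDual (WithLp 1 (Unitization ℂ A)) (2 * n)).rsmul y
          ((JPd A (2 * n)).1 (D (projA A x)))
    rw [hxy, map_add D, map_add D, map_smul D, map_smul D, hD (projA A x) (projA A y),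
      map_add ((JPd A (2 * n)).1), map_add ((JPd A (2 * n)).1),
      map_add ((JPd A (2 * n)).1),
      map_smul ((JPd A (2 * n)).1), map_smul ((JPd A (2 * n)).1),
      (JPd_spec A (projA A x) n).1.1 (D (projA A y)),
      (JPd_spec A (projA A y) n).1.2 (D (projA A x)),
      lsmul_decompA A (2 * n) x, rsmul_decompA A (2 * n) y]
    abel
  obtain ⟨ι, l, ξ, hne, hconv⟩ := h _ hD'
  refine ⟨ι, l, fun i => (JPd A (2 * n)).2 (ξ i), hne, fun a => ?_⟩
  have hkey : ∀ y,
      (iterDual A (2 * n)).lsmul a ((JPd A (2 * n)).2 y)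
        - (iterDual A (2 * n)).rsmul a ((JPd A (2 * n)).2 y)
      = (JPd A (2 * n)).2
          ((iterDual (WithLp 1 (Unitization ℂ A)) (2 * n)).lsmul (inclA A a) y
            - (iterDual (WithLp 1 (Unitization ℂ A)) (2 * n)).rsmul (inclA A a) y) := by
    intro y
    have hb := (JPd_spec A a n).2 y
    rw [map_sub ((JPd A (2 * n)).2)]
    exact (sub_eq_sub_iff_sub_eq_sub.mp hb).symm
  have h1 := hconv (inclA A a)
  have h2 := (((JPd A (2 * n)).2).continuous.tendsto _).comp h1
  have h3 : (JPd A (2 * n)).2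
      (((((JPd A (2 * n)).1).comp D).comp (projA A)) (inclA A a)) = D a := by
    show (JPd A (2 * n)).2 ((JPd A (2 * n)).1 (D (projA A (inclA A a)))) = D a
    rw [projA_inclA A a]
    exact JPd_leftInv A (2 * n) (D a)
  rw [← h3]
  exact h2.congr fun i => (hkey (ξ i)).symm
end

section
/- Let A be a non-unital Banach algebra. If A is approximately (2n−1)-weakly amenable, then its unitization A# is approximately (2n−1)-weakly amenable. -/
open ContinuousLinearMap Filter Topology

open ContinuousLinearMap Filter Topology

variable {A : Type} [NonUnitalNormedRing A] [NormedSpace ℂ A]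

variable (A) [IsScalarTower ℂ A A] [SMulCommClass ℂ A A] [CompleteSpace A]

variable {A}

variable (A)

variable (A : Type) [NonUnitalNormedRing A] [NormedSpace ℂ A]
  [IsScalarTower ℂ A A] [SMulCommClass ℂ A A] [CompleteSpace A]



/-! ### Auxiliary material for the unitization theorem -/

section AuxGeneric

variable {C : Type} [NonUnitalNormedRing C] [NormedSpace ℂ C]
  [IsScalarTower ℂ C C] [SMulCommClass ℂ C C] [CompleteSpace C]

/-- View an element of the `(k+1)`-st dual as a continuous linear functional. -/
@[reducible] def asFn {k : ℕ} (Λ : (iterDual C (k + 1)).carrier) :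
    (iterDual C k).carrier →L[ℂ] ℂ := Λ

/-- Canonical embedding of a bimodule level into its double dual. -/
noncomputable def ddEmb (k : ℕ) :
    (iterDual C k).carrier →L[ℂ] (iterDual C (k + 2)).carrier :=
  ContinuousLinearMap.apply ℂ ℂ

@[simp] lemma ddEmb_apply (k : ℕ) (x : (iterDual C k).carrier)
    (Λ : (iterDual C (k + 1)).carrier) : asFn (ddEmb k x) Λ = asFn Λ x := rfl

lemma ddEmb_lsmul (k : ℕ) (a : C) (x : (iterDual C k).carrier) :
    ddEmb k ((iterDual C k).lsmul a x) = (iterDual C (k + 2)).lsmul a (ddEmb k x) :=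
  ContinuousLinearMap.ext fun _ => rfl

lemma ddEmb_rsmul (k : ℕ) (a : C) (x : (iterDual C k).carrier) :
    ddEmb k ((iterDual C k).rsmul a x) = (iterDual C (k + 2)).rsmul a (ddEmb k x) :=
  ContinuousLinearMap.ext fun _ => rfl

end AuxGeneric

section ASide

/-- The canonical embedding `A → A^{(2j)}`. -/
noncomputable def liftEven : (j : ℕ) → A →L[ℂ] (iterDual A (2 * j)).carrier
  | 0 => ContinuousLinearMap.id ℂ A
  | j + 1 => (ddEmb (2 * j)).comp (liftEven j)

/-- The canonical embedding `A^{(1)} → A^{(2j+1)}`. -/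
noncomputable def liftOdd : (j : ℕ) → (iterDual A 1).carrier →L[ℂ] (iterDual A (2 * j + 1)).carrier
  | 0 => ContinuousLinearMap.id ℂ _
  | j + 1 => (ddEmb (2 * j + 1)).comp (liftOdd j)

lemma liftEven_lsmul (j : ℕ) (a x : A) :
    (iterDual A (2 * j)).lsmul a (liftEven A j x) = liftEven A j (a * x) := by
  induction j with
  | zero => rfl
  | succ j ih =>
      show (iterDual A (2 * j + 2)).lsmul a (ddEmb (2 * j) (liftEven A j x))
        = ddEmb (2 * j) (liftEven A j (a * x))
      rw [← ddEmb_lsmul, ih]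

lemma liftEven_rsmul (j : ℕ) (a x : A) :
    (iterDual A (2 * j)).rsmul a (liftEven A j x) = liftEven A j (x * a) := by
  induction j with
  | zero => rfl
  | succ j ih =>
      show (iterDual A (2 * j + 2)).rsmul a (ddEmb (2 * j) (liftEven A j x))
        = ddEmb (2 * j) (liftEven A j (x * a))
      rw [← ddEmb_rsmul, ih]

lemma liftOdd_lsmul (j : ℕ) (a : A) (Ψ : (iterDual A 1).carrier) :
    (iterDual A (2 * j + 1)).lsmul a (liftOdd A j Ψ) = liftOdd A j ((iterDual A 1).lsmul a Ψ) := by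
  induction j with
  | zero => rfl
  | succ j ih =>
      show (iterDual A (2 * j + 1 + 2)).lsmul a (ddEmb (2 * j + 1) (liftOdd A j Ψ))
        = ddEmb (2 * j + 1) (liftOdd A j ((iterDual A 1).lsmul a Ψ))
      rw [← ddEmb_lsmul, ih]

lemma liftOdd_rsmul (j : ℕ) (a : A) (Ψ : (iterDual A 1).carrier) :
    (iterDual A (2 * j + 1)).rsmul a (liftOdd A j Ψ) = liftOdd A j ((iterDual A 1).rsmul a Ψ) := by
  induction j with
  | zero => rfl
  | succ j ih =>
      show (iterDual A (2 * j + 1 + 2)).rsmul a (ddEmb (2 * j + 1) (liftOdd A j Ψ))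
        = ddEmb (2 * j + 1) (liftOdd A j ((iterDual A 1).rsmul a Ψ))
      rw [← ddEmb_rsmul, ih]

lemma lift_pair (j : ℕ) (Ψ : (iterDual A 1).carrier) (a : A) :
    asFn (liftOdd A j Ψ) (liftEven A j a) = asFn Ψ a := by
  induction j with
  | zero => rfl
  | succ j ih => exact ih

/-- Essentiality: approximate `(2j+1)`-weak amenability forces `span A²` to be dense. -/
lemma essential_of_approx (j : ℕ) (h : ApproxNWeaklyAmenable A (2 * j + 1)) :
    (Submodule.span ℂ {x : A | ∃ a b : A, a * b = x}).topologicalClosure = ⊤ := by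
  by_contra hS
  set S := (Submodule.span ℂ {x : A | ∃ a b : A, a * b = x}).topologicalClosure with hSdef
  obtain ⟨x₀, hx₀⟩ : ∃ x₀ : A, x₀ ∉ S := by
    by_contra hc; push_neg at hc; exact hS (Submodule.eq_top_iff'.mpr hc)
  haveI : IsClosed (S : Set A) := Submodule.isClosed_topologicalClosure _
  let mkC : A →L[ℂ] (A ⧸ S) :=
    LinearMap.mkContinuous S.mkQ 1 (fun x => by
      rw [one_mul]; simpa using Submodule.Quotient.norm_mk_le S x)
  have hmk0 : (mkC x₀ : A ⧸ S) ≠ 0 := by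
    simpa [mkC, LinearMap.mkContinuous_apply, Submodule.Quotient.mk_eq_zero] using hx₀
  obtain ⟨g, -, hg⟩ := exists_dual_vector ℂ (mkC x₀) (norm_ne_zero_iff.mpr hmk0)
  set φ := g.comp mkC with hφdef
  have hφx₀ : φ x₀ ≠ 0 := by
    intro hc
    rw [hφdef] at hc
    simp only [ContinuousLinearMap.comp_apply, hg] at hc
    exact (norm_ne_zero_iff.mpr hmk0) (Complex.ofReal_eq_zero.mp hc)
  have hφS : ∀ x ∈ S, φ x = 0 := by
    intro x hx
    rw [hφdef]
    simp [mkC, LinearMap.mkContinuous_apply, (Submodule.Quotient.mk_eq_zero S).mpr hx]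
  have hprod : ∀ a b : A, φ (a * b) = 0 := fun a b =>
    hφS _ (Submodule.le_topologicalClosure _ (Submodule.subset_span ⟨a, b, rfl⟩))
  -- view `φ` as an element of `A^{(1)}` killed by both actions
  have hlφ : ∀ a : A, (iterDual A 1).lsmul a (φ : (iterDual A 1).carrier) = 0 := by
    intro a; refine ContinuousLinearMap.ext fun x => ?_
    show φ ((show A from x) * a) = 0
    exact hprod _ a
  have hrφ : ∀ a : A, (iterDual A 1).rsmul a (φ : (iterDual A 1).carrier) = 0 := by
    intro a; refine ContinuousLinearMap.ext fun x => ?_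
    show φ (a * (show A from x)) = 0
    exact hprod a _
  set Λ₀ := liftOdd A j φ with hΛ₀
  set D' : A →L[ℂ] (iterDual A (2 * j + 1)).carrier := ContinuousLinearMap.smulRight φ Λ₀
    with hD'def
  have hder : IsDerivation (iterDual A (2 * j + 1)) D' := by
    intro a b
    have h1 : (iterDual A (2 * j + 1)).lsmul a Λ₀ = 0 := by
      rw [hΛ₀]; exact (liftOdd_lsmul A j a φ).trans (by rw [hlφ, map_zero])
    have h2 : (iterDual A (2 * j + 1)).rsmul b Λ₀ = 0 := by
      rw [hΛ₀]; exact (liftOdd_rsmul A j b φ).trans (by rw [hrφ, map_zero])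
    show φ (a * b) • Λ₀ = (iterDual A (2 * j + 1)).lsmul a (φ b • Λ₀)
      + (iterDual A (2 * j + 1)).rsmul b (φ a • Λ₀)
    rw [hprod a b, zero_smul, map_smul, map_smul, h1, h2, smul_zero, smul_zero, add_zero]
  obtain ⟨ι, l, Λs, hl, hconv⟩ := h D' hder
  haveI := hl
  have hzero : Tendsto
      (fun i => (ContinuousLinearMap.apply ℂ ℂ (liftEven A j x₀))
        ((iterDual A (2 * j + 1)).lsmul x₀ (Λs i)
          - (iterDual A (2 * j + 1)).rsmul x₀ (Λs i))) l
      (𝓝 ((ContinuousLinearMap.apply ℂ ℂ (liftEven A j x₀)) (D' x₀))) :=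
    ((ContinuousLinearMap.apply ℂ ℂ (liftEven A j x₀)).continuous.tendsto _).comp (hconv x₀)
  have heval : ∀ i, (ContinuousLinearMap.apply ℂ ℂ (liftEven A j x₀))
      ((iterDual A (2 * j + 1)).lsmul x₀ (Λs i)
        - (iterDual A (2 * j + 1)).rsmul x₀ (Λs i)) = 0 := by
    intro i
    show asFn (Λs i) ((iterDual A (2 * j)).rsmul x₀ (liftEven A j x₀))
      - asFn (Λs i) ((iterDual A (2 * j)).lsmul x₀ (liftEven A j x₀)) = 0
    rw [liftEven_rsmul, liftEven_lsmul, sub_self]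
  have hDval : (ContinuousLinearMap.apply ℂ ℂ (liftEven A j x₀)) (D' x₀) = 0 :=
    tendsto_nhds_unique ((hzero.congr heval)) tendsto_const_nhds
  have hsq : φ x₀ * φ x₀ = 0 := by
    have h2 : asFn (φ x₀ • Λ₀) (liftEven A j x₀) = 0 := hDval
    rw [show asFn (φ x₀ • Λ₀) (liftEven A j x₀) = φ x₀ * asFn Λ₀ (liftEven A j x₀) from rfl, hΛ₀,
      lift_pair A j φ x₀] at h2
    exact h2
  exact hφx₀ (mul_self_eq_zero.mp hsq)

end ASide

section BSide

/-- Abbreviation for the `ℓ¹`-unitization. -/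
abbrev UnA (A : Type) : Type := WithLp 1 (Unitization ℂ A)

/-- The inclusion `A → A#` as a continuous linear map. -/
noncomputable def inclC : A →L[ℂ] UnA A :=
  LinearMap.mkContinuous
    (((WithLp.linearEquiv 1 ℂ (Unitization ℂ A)).symm : Unitization ℂ A →ₗ[ℂ] UnA A).comp
      (Unitization.inrHom ℂ ℂ A)) 1
    (fun a => by
      rw [one_mul]
      exact le_of_eq (WithLp.unitization_norm_inr (𝕜 := ℂ) a))

/-- The projection `A# → A` as a continuous linear map. -/
noncomputable def projC : UnA A →L[ℂ] A :=
  LinearMap.mkContinuous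
    ((Unitization.sndHom ℂ ℂ A).comp (WithLp.linearEquiv 1 ℂ (Unitization ℂ A)).toLinearMap) 1
    (fun x => by
      rw [one_mul, WithLp.unitization_norm_def]
      exact le_add_of_nonneg_left (norm_nonneg _))

/-- The coordinate functional `A# → ℂ` as a continuous linear map. -/
noncomputable def fstC : UnA A →L[ℂ] ℂ :=
  LinearMap.mkContinuous
    (((Unitization.fstHom ℂ A).toLinearMap).comp
      (WithLp.linearEquiv 1 ℂ (Unitization ℂ A)).toLinearMap) 1
    (fun x => by
      rw [one_mul, WithLp.unitization_norm_def]
      exact le_add_of_nonneg_right (norm_nonneg _))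

lemma inclC_apply (a : A) :
    inclC A a = (WithLp.equiv 1 (Unitization ℂ A)).symm (Unitization.inr a) := rfl

lemma projC_apply (x : UnA A) :
    projC A x = ((WithLp.equiv 1 (Unitization ℂ A) x).snd) := rfl

lemma fstC_apply (x : UnA A) :
    fstC A x = ((WithLp.equiv 1 (Unitization ℂ A) x).fst) := rfl

lemma inclC_mul (a b : A) : inclC A (a * b) = inclC A a * inclC A b := by
  apply (WithLp.equiv 1 (Unitization ℂ A)).injective
  change _ = WithLp.equiv 1 (Unitization ℂ A) (inclC A a) * WithLp.equiv 1 (Unitization ℂ A) (inclC A b)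
  simp only [inclC_apply, Equiv.apply_symm_apply]
  exact Unitization.inr_mul ℂ a b

lemma projC_mul (x y : UnA A) :
    projC A (x * y) = fstC A x • projC A y + fstC A y • projC A x + projC A x * projC A y := by
  simp only [projC_apply, fstC_apply, WithLp.unitization_mul, Unitization.snd_mul]
  exact Unitization.snd_mul _ _

lemma decomp0 (x : UnA A) : inclC A (projC A x) + fstC A x • 1 = x := by
  apply (WithLp.linearEquiv 1 ℂ (Unitization ℂ A)).injective
  rw [map_add, map_smul]
  show (Unitization.inr ((WithLp.equiv 1 (Unitization ℂ A) x).snd) : Unitization ℂ A)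
      + ((WithLp.equiv 1 (Unitization ℂ A) x).fst) • 1
    = WithLp.equiv 1 (Unitization ℂ A) x
  refine Unitization.ext ?_ ?_
  · simp
  · simp

/-- Restriction maps `P_k : (A#)^{(k)} → A^{(k)}` and extension maps
`J_k : A^{(k)} → (A#)^{(k)}`. -/
noncomputable def PJmap : (k : ℕ) →
    ((iterDual (UnA A) k).carrier →L[ℂ] (iterDual A k).carrier) ×
    ((iterDual A k).carrier →L[ℂ] (iterDual (UnA A) k).carrier)
  | 0 => (projC A, inclC A)
  | k + 1 =>
      ((compL ℂ (iterDual A k).carrier (iterDual (UnA A) k).carrier ℂ).flip (PJmap k).2,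
       (compL ℂ (iterDual (UnA A) k).carrier (iterDual A k).carrier ℂ).flip (PJmap k).1)

noncomputable def Pm (k : ℕ) : (iterDual (UnA A) k).carrier →L[ℂ] (iterDual A k).carrier :=
  (PJmap A k).1

noncomputable def Jm (k : ℕ) : (iterDual A k).carrier →L[ℂ] (iterDual (UnA A) k).carrier :=
  (PJmap A k).2

/-- `J` at even levels is an `A`-bimodule map. -/
lemma JmMod : ∀ j : ℕ,
    (∀ (a : A) (x : (iterDual A (2 * j)).carrier),
      (iterDual (UnA A) (2 * j)).lsmul (inclC A a) (Jm A (2 * j) x)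
        = Jm A (2 * j) ((iterDual A (2 * j)).lsmul a x)) ∧
    (∀ (a : A) (x : (iterDual A (2 * j)).carrier),
      (iterDual (UnA A) (2 * j)).rsmul (inclC A a) (Jm A (2 * j) x)
        = Jm A (2 * j) ((iterDual A (2 * j)).rsmul a x)) := by
  intro j
  induction j with
  | zero =>
      constructor
      · intro a x; exact (inclC_mul A a x).symm
      · intro a x; exact (inclC_mul A x a).symm
  | succ j ih =>
      obtain ⟨hl, hr⟩ := ih
      have pl : ∀ (a : A) (Λ : (iterDual (UnA A) (2 * j + 1)).carrier),
          Pm A (2 * j + 1) ((iterDual (UnA A) (2 * j + 1)).lsmul (inclC A a) Λ)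
            = (iterDual A (2 * j + 1)).lsmul a (Pm A (2 * j + 1) Λ) := by
        intro a Λ
        refine ContinuousLinearMap.ext fun y => ?_
        exact congrArg (asFn Λ) (hr a y)
      have pr : ∀ (a : A) (Λ : (iterDual (UnA A) (2 * j + 1)).carrier),
          Pm A (2 * j + 1) ((iterDual (UnA A) (2 * j + 1)).rsmul (inclC A a) Λ)
            = (iterDual A (2 * j + 1)).rsmul a (Pm A (2 * j + 1) Λ) := by
        intro a Λ
        refine ContinuousLinearMap.ext fun y => ?_
        exact congrArg (asFn Λ) (hl a y)
      constructor
      · intro a x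
        refine ContinuousLinearMap.ext fun Λ => ?_
        exact congrArg (asFn x) (pr a Λ)
      · intro a x
        refine ContinuousLinearMap.ext fun Λ => ?_
        exact congrArg (asFn x) (pl a Λ)

/-- `P` at odd levels is an `A`-bimodule map. -/
lemma PmMod (j : ℕ) :
    (∀ (a : A) (Λ : (iterDual (UnA A) (2 * j + 1)).carrier),
      Pm A (2 * j + 1) ((iterDual (UnA A) (2 * j + 1)).lsmul (inclC A a) Λ)
        = (iterDual A (2 * j + 1)).lsmul a (Pm A (2 * j + 1) Λ)) ∧
    (∀ (a : A) (Λ : (iterDual (UnA A) (2 * j + 1)).carrier),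
      Pm A (2 * j + 1) ((iterDual (UnA A) (2 * j + 1)).rsmul (inclC A a) Λ)
        = (iterDual A (2 * j + 1)).rsmul a (Pm A (2 * j + 1) Λ)) := by
  obtain ⟨hl, hr⟩ := JmMod A j
  constructor
  · intro a Λ
    refine ContinuousLinearMap.ext fun y => ?_
    exact congrArg (asFn Λ) (hr a y)
  · intro a Λ
    refine ContinuousLinearMap.ext fun y => ?_
    exact congrArg (asFn Λ) (hl a y)

/-- `P` at even levels intertwines commutators. -/
lemma PmComm : ∀ j : ℕ, ∀ (b : UnA A) (y : (iterDual (UnA A) (2 * j)).carrier),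
    Pm A (2 * j) ((iterDual (UnA A) (2 * j)).lsmul b y)
      - Pm A (2 * j) ((iterDual (UnA A) (2 * j)).rsmul b y)
    = (iterDual A (2 * j)).lsmul (projC A b) (Pm A (2 * j) y)
      - (iterDual A (2 * j)).rsmul (projC A b) (Pm A (2 * j) y) := by
  intro j
  induction j with
  | zero =>
      intro b y
      show projC A (b * (show UnA A from y)) - projC A ((show UnA A from y) * b)
        = projC A b * projC A y - projC A y * projC A b
      rw [projC_mul, projC_mul]
      abel
  | succ j ih =>
      have jc : ∀ (b : UnA A) (Λ : (iterDual A (2 * j + 1)).carrier),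
          (iterDual (UnA A) (2 * j + 1)).lsmul b (Jm A (2 * j + 1) Λ)
            - (iterDual (UnA A) (2 * j + 1)).rsmul b (Jm A (2 * j + 1) Λ)
          = Jm A (2 * j + 1) ((iterDual A (2 * j + 1)).lsmul (projC A b) Λ
            - (iterDual A (2 * j + 1)).rsmul (projC A b) Λ) := by
        intro b Λ
        refine ContinuousLinearMap.ext fun y => ?_
        have h := congrArg (asFn Λ) (ih b y)
        rw [map_sub, map_sub] at h
        show asFn Λ (Pm A (2 * j) ((iterDual (UnA A) (2 * j)).rsmul b y))
            - asFn Λ (Pm A (2 * j) ((iterDual (UnA A) (2 * j)).lsmul b y))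
          = asFn Λ ((iterDual A (2 * j)).rsmul (projC A b) (Pm A (2 * j) y))
            - asFn Λ ((iterDual A (2 * j)).lsmul (projC A b) (Pm A (2 * j) y))
        linear_combination -h
      intro b y
      refine ContinuousLinearMap.ext fun Λ => ?_
      have h2 := congrArg (asFn y) (jc b Λ)
      simp only [map_sub] at h2
      show asFn y ((iterDual (UnA A) (2 * j + 1)).rsmul b (Jm A (2 * j + 1) Λ))
          - asFn y ((iterDual (UnA A) (2 * j + 1)).lsmul b (Jm A (2 * j + 1) Λ))
        = asFn y (Jm A (2 * j + 1) ((iterDual A (2 * j + 1)).rsmul (projC A b) Λ))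
          - asFn y (Jm A (2 * j + 1) ((iterDual A (2 * j + 1)).lsmul (projC A b) Λ))
      linear_combination -h2

/-- `J` at odd levels intertwines commutators. -/
lemma JmComm (j : ℕ) (b : UnA A) (Λ : (iterDual A (2 * j + 1)).carrier) :
    (iterDual (UnA A) (2 * j + 1)).lsmul b (Jm A (2 * j + 1) Λ)
      - (iterDual (UnA A) (2 * j + 1)).rsmul b (Jm A (2 * j + 1) Λ)
    = Jm A (2 * j + 1) ((iterDual A (2 * j + 1)).lsmul (projC A b) Λ
      - (iterDual A (2 * j + 1)).rsmul (projC A b) Λ) := by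
  refine ContinuousLinearMap.ext fun y => ?_
  have h := congrArg (asFn Λ) (PmComm A j b y)
  rw [map_sub, map_sub] at h
  show asFn Λ (Pm A (2 * j) ((iterDual (UnA A) (2 * j)).rsmul b y))
      - asFn Λ (Pm A (2 * j) ((iterDual (UnA A) (2 * j)).lsmul b y))
    = asFn Λ ((iterDual A (2 * j)).rsmul (projC A b) (Pm A (2 * j) y))
      - asFn Λ ((iterDual A (2 * j)).lsmul (projC A b) (Pm A (2 * j) y))
  linear_combination -h

/-- The canonical element `e` (image of the identity) at even levels. -/
noncomputable def Ee : (j : ℕ) → (iterDual (UnA A) (2 * j)).carrier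
  | 0 => (1 : UnA A)
  | j + 1 => ddEmb (2 * j) (Ee j)

/-- The canonical element `e*` at odd levels. -/
noncomputable def Eo : (j : ℕ) → (iterDual (UnA A) (2 * j + 1)).carrier
  | 0 => fstC A
  | j + 1 => ddEmb (2 * j + 1) (Eo j)

/-- Action of `A` on the canonical element at even levels. -/
lemma EeMod : ∀ j : ℕ, (∀ a : A,
    (iterDual (UnA A) (2 * j)).rsmul (inclC A a) (Ee A j) = Jm A (2 * j) (liftEven A j a)) ∧
    (∀ a : A,
    (iterDual (UnA A) (2 * j)).lsmul (inclC A a) (Ee A j) = Jm A (2 * j) (liftEven A j a)) := by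
  intro j
  induction j with
  | zero =>
      constructor
      · intro a; exact one_mul (inclC A a)
      · intro a; exact mul_one (inclC A a)
  | succ j ih =>
      obtain ⟨ihr, ihl⟩ := ih
      constructor
      · intro a
        refine ContinuousLinearMap.ext fun Λ => ?_
        exact congrArg (asFn Λ) (ihr a)
      · intro a
        refine ContinuousLinearMap.ext fun Λ => ?_
        exact congrArg (asFn Λ) (ihl a)

/-- The identity of `A#` acts trivially at every level. -/
lemma oneLem : ∀ (k : ℕ) (x : (iterDual (UnA A) k).carrier),
    (iterDual (UnA A) k).lsmul 1 x = x ∧ (iterDual (UnA A) k).rsmul 1 x = x := by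
  intro k
  induction k with
  | zero => exact fun x => ⟨one_mul (show UnA A from x), mul_one (show UnA A from x)⟩
  | succ k ih =>
      intro Λ
      constructor
      · refine ContinuousLinearMap.ext fun y => ?_
        exact congrArg (asFn Λ) (ih y).2
      · refine ContinuousLinearMap.ext fun y => ?_
        exact congrArg (asFn Λ) (ih y).1

/-- Decomposition at even levels. -/
lemma DecEven : ∀ (j : ℕ) (y : (iterDual (UnA A) (2 * j)).carrier),
    Jm A (2 * j) (Pm A (2 * j) y) + asFn (Eo A j) y • Ee A j = y := by
  intro j
  induction j with
  | zero =>
      intro y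
      exact decomp0 A y
  | succ j ih =>
      have docc : ∀ Λ : (iterDual (UnA A) (2 * j + 1)).carrier,
          Jm A (2 * j + 1) (Pm A (2 * j + 1) Λ) + asFn Λ (Ee A j) • Eo A j = Λ := by
        intro Λ
        refine ContinuousLinearMap.ext fun y => ?_
        have h := congrArg (asFn Λ) (ih y)
        rw [map_add, map_smul] at h
        show asFn Λ (Jm A (2 * j) (Pm A (2 * j) y)) + asFn Λ (Ee A j) • asFn (Eo A j) y
          = asFn Λ y
        rw [smul_eq_mul] at h ⊢
        linear_combination h
      intro y
      refine ContinuousLinearMap.ext fun Λ => ?_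
      have h := congrArg (asFn y) (docc Λ)
      rw [map_add, map_smul] at h
      show asFn y (Jm A (2 * j + 1) (Pm A (2 * j + 1) Λ)) + asFn y (Eo A j) • asFn Λ (Ee A j)
        = asFn y Λ
      rw [smul_eq_mul] at h ⊢
      linear_combination h

/-- Decomposition at odd levels. -/
lemma DecOdd (j : ℕ) (Λ : (iterDual (UnA A) (2 * j + 1)).carrier) :
    Jm A (2 * j + 1) (Pm A (2 * j + 1) Λ) + asFn Λ (Ee A j) • Eo A j = Λ := by
  refine ContinuousLinearMap.ext fun y => ?_
  have h := congrArg (asFn Λ) (DecEven A j y)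
  rw [map_add, map_smul] at h
  show asFn Λ (Jm A (2 * j) (Pm A (2 * j) y)) + asFn Λ (Ee A j) • asFn (Eo A j) y = asFn Λ y
  rw [smul_eq_mul] at h ⊢
  linear_combination h

end BSide

/-- If a non-unital Banach algebra `A` is approximately `(2n−1)`-weakly amenable,
then so is its unitization `A#`. -/
theorem unitization_approxOddWeaklyAmenable
    (hnu : ¬ ∃ e : A, ∀ a : A, e * a = a ∧ a * e = a)
    (n : ℕ) (hn : 1 ≤ n)
    (h : ApproxNWeaklyAmenable A (2 * n - 1)) :
    ApproxNWeaklyAmenable (WithLp 1 (Unitization ℂ A)) (2 * n - 1) := by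
  obtain ⟨j, rfl⟩ : ∃ j, n = j + 1 := ⟨n - 1, (Nat.succ_pred_eq_of_pos hn).symm⟩
  have h' : ApproxNWeaklyAmenable A (2 * j + 1) := h
  show ApproxNWeaklyAmenable (UnA A) (2 * j + 1)
  intro D hD
  -- the identity goes to zero
  have hD1 : D 1 = 0 := by
    have h11 := hD 1 1
    rw [one_mul, (oneLem A (2 * j + 1) (D 1)).1, (oneLem A (2 * j + 1) (D 1)).2] at h11
    exact (add_eq_left.mp h11.symm)
  -- the induced derivation on `A`
  set d : A →L[ℂ] (iterDual A (2 * j + 1)).carrier :=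
    (Pm A (2 * j + 1)).comp (D.comp (inclC A)) with hd_def
  have hd : IsDerivation (iterDual A (2 * j + 1)) d := by
    intro a b
    have hD' := hD (inclC A a) (inclC A b)
    rw [← inclC_mul] at hD'
    show Pm A (2 * j + 1) (D (inclC A (a * b))) = _
    rw [hD', map_add, (PmMod A j).1 a (D (inclC A b)), (PmMod A j).2 b (D (inclC A a))]
    rfl
  obtain ⟨ι, l, Λs, hl, hconv⟩ := h' d hd
  haveI := hl
  -- the scalar part of `D` restricted to `A`
  set φ : A →L[ℂ] ℂ :=
    (ContinuousLinearMap.apply ℂ ℂ (Ee A j)).comp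
      (show A →L[ℂ] ((iterDual (UnA A) (2 * j)).carrier →L[ℂ] ℂ) from D.comp (inclC A))
    with hφ_def
  have hφval : ∀ a : A, φ a = asFn (D (inclC A a)) (Ee A j) := fun _ => rfl
  have hφprod : ∀ a b : A, φ (a * b) = 0 := by
    intro a b
    have hD' := hD (inclC A a) (inclC A b)
    rw [← inclC_mul] at hD'
    have e1 : φ (a * b) = asFn (d b) (liftEven A j a) + asFn (d a) (liftEven A j b) := by
      rw [hφval, hD']
      show asFn ((iterDual (UnA A) (2 * j + 1)).lsmul (inclC A a) (D (inclC A b))) (Ee A j)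
          + asFn ((iterDual (UnA A) (2 * j + 1)).rsmul (inclC A b) (D (inclC A a))) (Ee A j)
        = _
      rw [show asFn ((iterDual (UnA A) (2 * j + 1)).lsmul (inclC A a) (D (inclC A b))) (Ee A j)
          = asFn (D (inclC A b)) ((iterDual (UnA A) (2 * j)).rsmul (inclC A a) (Ee A j)) from rfl,
        show asFn ((iterDual (UnA A) (2 * j + 1)).rsmul (inclC A b) (D (inclC A a))) (Ee A j)
          = asFn (D (inclC A a)) ((iterDual (UnA A) (2 * j)).lsmul (inclC A b) (Ee A j)) from rfl,
        (EeMod A j).1 a, (EeMod A j).2 b]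
      rfl
    have t1 : Tendsto (fun i => (ContinuousLinearMap.apply ℂ ℂ (liftEven A j a))
        ((iterDual A (2 * j + 1)).lsmul b (Λs i) - (iterDual A (2 * j + 1)).rsmul b (Λs i))) l
        (𝓝 ((ContinuousLinearMap.apply ℂ ℂ (liftEven A j a)) (d b))) :=
      ((ContinuousLinearMap.apply ℂ ℂ (liftEven A j a)).continuous.tendsto _).comp (hconv b)
    have t2 : Tendsto (fun i => (ContinuousLinearMap.apply ℂ ℂ (liftEven A j b))
        ((iterDual A (2 * j + 1)).lsmul a (Λs i) - (iterDual A (2 * j + 1)).rsmul a (Λs i))) l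
        (𝓝 ((ContinuousLinearMap.apply ℂ ℂ (liftEven A j b)) (d a))) :=
      ((ContinuousLinearMap.apply ℂ ℂ (liftEven A j b)).continuous.tendsto _).comp (hconv a)
    have hzero : ∀ i, (ContinuousLinearMap.apply ℂ ℂ (liftEven A j a))
        ((iterDual A (2 * j + 1)).lsmul b (Λs i) - (iterDual A (2 * j + 1)).rsmul b (Λs i))
        + (ContinuousLinearMap.apply ℂ ℂ (liftEven A j b))
        ((iterDual A (2 * j + 1)).lsmul a (Λs i) - (iterDual A (2 * j + 1)).rsmul a (Λs i))
        = 0 := by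
      intro i
      show (asFn (Λs i) ((iterDual A (2 * j)).rsmul b (liftEven A j a))
          - asFn (Λs i) ((iterDual A (2 * j)).lsmul b (liftEven A j a)))
        + (asFn (Λs i) ((iterDual A (2 * j)).rsmul a (liftEven A j b))
          - asFn (Λs i) ((iterDual A (2 * j)).lsmul a (liftEven A j b))) = 0
      rw [liftEven_rsmul, liftEven_lsmul, liftEven_rsmul, liftEven_lsmul]
      ring
    have hsum : asFn (d b) (liftEven A j a) + asFn (d a) (liftEven A j b) = 0 :=
      tendsto_nhds_unique ((t1.add t2).congr hzero) tendsto_const_nhds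
    rw [e1, hsum]
  have hφ0 : ∀ x : A, φ x = 0 := by
    have hdense := essential_of_approx A j h'
    have hsub : (Submodule.span ℂ {x : A | ∃ a b : A, a * b = x}).topologicalClosure
        ≤ LinearMap.ker (φ : A →ₗ[ℂ] ℂ) := by
      apply Submodule.topologicalClosure_minimal
      · rw [Submodule.span_le]
        rintro x ⟨a, b, rfl⟩
        exact LinearMap.mem_ker.mpr (hφprod a b)
      · exact ContinuousLinearMap.isClosed_ker φ
    intro x
    exact LinearMap.mem_ker.mp (hsub (hdense ▸ Submodule.mem_top))
  -- assemble the approximating net in `(A#)^{(2j+1)}`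
  refine ⟨ι, l, fun i => Jm A (2 * j + 1) (Λs i), hl, ?_⟩
  intro b
  have key : D b = Jm A (2 * j + 1) (d (projC A b)) := by
    have hb := decomp0 A b
    have e2 : D b = D (inclC A (projC A b)) := by
      conv_lhs => rw [← hb]
      rw [map_add, map_smul, hD1, smul_zero, add_zero]
    rw [e2, ← DecOdd A j (D (inclC A (projC A b)))]
    rw [show asFn (D (inclC A (projC A b))) (Ee A j) = φ (projC A b) from rfl, hφ0, zero_smul,
      add_zero]
    rfl
  rw [key]
  have tt := ((Jm A (2 * j + 1)).continuous.tendsto (d (projC A b))).comp (hconv (projC A b))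
  refine tt.congr fun i => ?_
  show Jm A (2 * j + 1) ((iterDual A (2 * j + 1)).lsmul (projC A b) (Λs i)
      - (iterDual A (2 * j + 1)).rsmul (projC A b) (Λs i)) = _
  exact (JmComm A j b (Λs i)).symm
end

section
/- Let A be a non-unital Banach algebra with a bounded approximate identity. Then A is approximately weakly amenable if and only if its unitization A# is approximately weakly amenable. -/
open ContinuousLinearMap Filter Topology

open ContinuousLinearMap Filter Topology

variable {A : Type} [NonUnitalNormedRing A] [NormedSpace ℂ A]

variable (A) [IsScalarTower ℂ A A] [SMulCommClass ℂ A A] [CompleteSpace A]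

variable {A}

variable (A)

section Concrete
variable (A : Type) [NonUnitalNormedRing A] [NormedSpace ℂ A]
  [IsScalarTower ℂ A A] [SMulCommClass ℂ A A]

/-- The left action of `A` on its dual `A*`: `(a·f)(b) = f (b * a)`. -/
noncomputable def lact (a : A) (f : A →L[ℂ] ℂ) : A →L[ℂ] ℂ :=
  f.comp ((ContinuousLinearMap.mul ℂ A).flip a)

/-- The right action of `A` on its dual `A*`: `(f·a)(b) = f (a * b)`. -/
noncomputable def ract (a : A) (f : A →L[ℂ] ℂ) : A →L[ℂ] ℂ :=
  f.comp (ContinuousLinearMap.mul ℂ A a)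

variable [CompleteSpace A]

/-- `A` is approximately cyclic amenable: every continuous cyclic derivation
`D : A → A*` is approximately inner. -/
def ApproxCyclicAmenable : Prop :=
  ∀ D : A →L[ℂ] (A →L[ℂ] ℂ),
    (∀ a b : A, D (a * b) = lact A a (D b) + ract A b (D a)) →
    (∀ a b : A, D a b + D b a = 0) →
    ∃ (ι : Type) (l : Filter ι) (x : ι → (A →L[ℂ] ℂ)), l.NeBot ∧
      ∀ a : A, Tendsto (fun i => lact A a (x i) - ract A a (x i)) l (𝓝 (D a))

/-- `A` has a bounded (two-sided) approximate identity. -/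
def HasBAI : Prop :=
  ∃ (ι : Type) (l : Filter ι) (e : ι → A) (C : ℝ), l.NeBot ∧ (∀ i, ‖e i‖ ≤ C) ∧
    ∀ a : A, Tendsto (fun i => e i * a) l (𝓝 a) ∧ Tendsto (fun i => a * e i) l (𝓝 a)

end Concrete
variable (A : Type) [NonUnitalNormedRing A] [NormedSpace ℂ A]
  [IsScalarTower ℂ A A] [SMulCommClass ℂ A A] [CompleteSpace A]


set_option linter.unusedSectionVars false
set_option maxHeartbeats 1000000
set_option synthInstance.maxHeartbeats 400000

noncomputable section AuxAWA
variable (A : Type) [NonUnitalNormedRing A] [NormedSpace ℂ A]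
  [IsScalarTower ℂ A A] [SMulCommClass ℂ A A] [CompleteSpace A]

variable (A : Type) [NonUnitalNormedRing A] [NormedSpace ℂ A]
  [IsScalarTower ℂ A A] [SMulCommClass ℂ A A] [CompleteSpace A]

def awaSnd : WithLp 1 (Unitization ℂ A) →L[ℂ] A :=
  LinearMap.mkContinuous
    ((Unitization.sndHom ℂ ℂ A).comp (WithLp.linearEquiv 1 ℂ (Unitization ℂ A)).toLinearMap) 1
    fun x => by
      rw [one_mul, WithLp.unitization_norm_def]
      exact le_add_of_nonneg_left (norm_nonneg _)

def awaFst : WithLp 1 (Unitization ℂ A) →L[ℂ] ℂ :=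
  LinearMap.mkContinuous
    ((Unitization.fstHom ℂ A).toLinearMap.comp
      (WithLp.linearEquiv 1 ℂ (Unitization ℂ A)).toLinearMap) 1
    fun x => by
      rw [one_mul, WithLp.unitization_norm_def]
      exact le_add_of_nonneg_right (norm_nonneg _)

def awaInr : A →L[ℂ] WithLp 1 (Unitization ℂ A) :=
  LinearMap.mkContinuous
    ((WithLp.linearEquiv 1 ℂ (Unitization ℂ A)).symm.toLinearMap.comp (Unitization.inrHom ℂ ℂ A)) 1
    fun a => by
      rw [one_mul]
      exact le_of_eq (WithLp.unitization_norm_inr a)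

variable {A}

@[simp] lemma awaSnd_apply (x : WithLp 1 (Unitization ℂ A)) :
    awaSnd A x = (WithLp.equiv 1 (Unitization ℂ A) x).snd := rfl

@[simp] lemma awaFst_apply (x : WithLp 1 (Unitization ℂ A)) :
    awaFst A x = (WithLp.equiv 1 (Unitization ℂ A) x).fst := rfl

@[simp] lemma awaInr_apply (a : A) :
    awaInr A a = (WithLp.equiv 1 (Unitization ℂ A)).symm (a : Unitization ℂ A) := rfl

lemma awaInr_mul (a b : A) : awaInr A (a * b) = awaInr A a * awaInr A b := by
  apply (WithLp.equiv 1 (Unitization ℂ A)).injective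
  simp [Unitization.inr_mul]

@[simp] lemma awaSnd_inr (a : A) : awaSnd A (awaInr A a) = a := by simp

@[simp] lemma awaFst_inr (a : A) : awaFst A (awaInr A a) = 0 := by simp

@[simp] lemma awaFst_one : awaFst A (1 : WithLp 1 (Unitization ℂ A)) = 1 := by
  simp only [awaFst_apply]
  exact Unitization.fst_one

@[simp] lemma awaSnd_one : awaSnd A (1 : WithLp 1 (Unitization ℂ A)) = 0 := by
  simp only [awaSnd_apply]
  exact Unitization.snd_one

lemma awaDecomp (u : WithLp 1 (Unitization ℂ A)) :
    u = awaFst A u • 1 + awaInr A (awaSnd A u) := by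
  apply (WithLp.equiv 1 (Unitization ℂ A)).injective
  have h1 : WithLp.equiv 1 (Unitization ℂ A) (awaFst A u • (1 : WithLp 1 (Unitization ℂ A)))
      = Unitization.inl ((WithLp.equiv 1 (Unitization ℂ A) u).fst) := by
    rw [show ∀ (c : ℂ) (y : WithLp 1 (Unitization ℂ A)), WithLp.equiv 1 _ (c • y) = c • WithLp.equiv 1 _ y from fun _ _ => rfl]
    rw [← Unitization.algebraMap_eq_inl (R := ℂ) (A := A), Algebra.algebraMap_eq_smul_one]
    rfl
  rw [show ∀ x y : WithLp 1 (Unitization ℂ A), WithLp.equiv 1 _ (x + y) = WithLp.equiv 1 _ x + WithLp.equiv 1 _ y from fun _ _ => rfl, h1, awaInr_apply, Equiv.apply_symm_apply, awaSnd_apply,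
    Unitization.inl_fst_add_inr_snd_eq]

lemma awaFst_mul (u v : WithLp 1 (Unitization ℂ A)) :
    awaFst A (u * v) = awaFst A u * awaFst A v := by
  simp only [awaFst_apply]
  exact Unitization.fst_mul _ _

lemma awaSnd_mul (u v : WithLp 1 (Unitization ℂ A)) :
    awaSnd A (u * v) = awaFst A u • awaSnd A v + awaFst A v • awaSnd A u
      + awaSnd A u * awaSnd A v := by
  simp only [awaSnd_apply, awaFst_apply]
  exact Unitization.snd_mul _ _


variable (A)

def awaRestrict : (WithLp 1 (Unitization ℂ A) →L[ℂ] ℂ) →L[ℂ] (A →L[ℂ] ℂ) :=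
  (compL ℂ A (WithLp 1 (Unitization ℂ A)) ℂ).flip (awaInr A)

def awaExtend : (A →L[ℂ] ℂ) →L[ℂ] (WithLp 1 (Unitization ℂ A) →L[ℂ] ℂ) :=
  (compL ℂ (WithLp 1 (Unitization ℂ A)) A ℂ).flip (awaSnd A)

variable {A}

@[simp] lemma awaRestrict_apply (Λ : WithLp 1 (Unitization ℂ A) →L[ℂ] ℂ) (b : A) :
    awaRestrict A Λ b = Λ (awaInr A b) := rfl

@[simp] lemma awaExtend_apply (f : A →L[ℂ] ℂ) (w : WithLp 1 (Unitization ℂ A)) :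
    awaExtend A f w = f (awaSnd A w) := rfl

end AuxAWA

section MainAWA
variable {A : Type} [NonUnitalNormedRing A] [NormedSpace ℂ A]
  [IsScalarTower ℂ A A] [SMulCommClass ℂ A A] [CompleteSpace A]

@[simp] lemma lact_apply' (a : A) (f : A →L[ℂ] ℂ) (b : A) : lact A a f b = f (b * a) := rfl
@[simp] lemma ract_apply' (a : A) (f : A →L[ℂ] ℂ) (b : A) : ract A a f b = f (a * b) := rfl

lemma awa_forward (hbai : HasBAI A) (hA : ApproxWeaklyAmenable A) :
    ApproxWeaklyAmenable (WithLp 1 (Unitization ℂ A)) := by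
  intro D0 hD0
  let D : WithLp 1 (Unitization ℂ A) →L[ℂ] (WithLp 1 (Unitization ℂ A) →L[ℂ] ℂ) := D0
  have hDeq : ∀ u v : WithLp 1 (Unitization ℂ A),
      D (u * v) = lact (WithLp 1 (Unitization ℂ A)) u (D v)
        + ract (WithLp 1 (Unitization ℂ A)) v (D u) := hD0
  have hD' : ∀ u v w : WithLp 1 (Unitization ℂ A), D (u * v) w = D v (w * u) + D u (v * w) := by
    intro u v w
    rw [hDeq]; rfl
  have hone : D 1 = 0 := by
    have h2 : D 1 = D 1 + D 1 := by
      ext w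
      have := hD' 1 1 w
      simpa using this
    exact left_eq_add.mp h2
  set d : A →L[ℂ] (A →L[ℂ] ℂ) := (awaRestrict A).comp (D.comp (awaInr A)) with hd_def
  have hd_apply : ∀ a b : A, d a b = D (awaInr A a) (awaInr A b) := fun a b => rfl
  have hd : IsDerivation (iterDual A 1) d := by
    intro a b
    show d (a * b) = lact A a (d b) + ract A b (d a)
    ext x
    show D (awaInr A (a * b)) (awaInr A x) = D (awaInr A b) (awaInr A (x * a))
        + D (awaInr A a) (awaInr A (b * x))
    rw [awaInr_mul a b, hD', awaInr_mul x a, awaInr_mul b x]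
  obtain ⟨κ, l, x0, hne, hx0⟩ := hA d hd
  haveI := hne
  let x : κ → (A →L[ℂ] ℂ) := x0
  have hx : ∀ a : A, Filter.Tendsto (fun i => lact A a (x i) - ract A a (x i)) l (𝓝 (d a)) := hx0
  have hxval : ∀ a b : A, Filter.Tendsto (fun i => x i (b * a) - x i (a * b)) l (𝓝 (d a b)) := by
    intro a b
    have h := ((ContinuousLinearMap.apply ℂ ℂ b).continuous.tendsto (d a)).comp (hx a)
    have heq : ((ContinuousLinearMap.apply ℂ ℂ b) ∘ fun i => lact A a (x i) - ract A a (x i))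
        = fun i => x i (b * a) - x i (a * b) := by
      funext i; simp
    rw [heq] at h
    exact h
  have hzero : ∀ a b : A, d a b + d b a = 0 := by
    intro a b
    have h1 := (hxval a b).add (hxval b a)
    have h2 : (fun i => (x i (b*a) - x i (a*b)) + (x i (a*b) - x i (b*a))) = fun _ => (0:ℂ) := by
      funext i; ring
    rw [h2] at h1
    exact tendsto_nhds_unique h1 tendsto_const_nhds
  obtain ⟨κ0, l0, e, C, hl0, hC, hconv⟩ := hbai
  haveI := hl0
  have hψab : ∀ a b : A, D (awaInr A (a * b)) 1 = 0 := by
    intro a b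
    rw [awaInr_mul, hD', one_mul, mul_one]
    rw [← hd_apply, ← hd_apply, add_comm]
    exact hzero a b
  have hψ : ∀ a : A, D (awaInr A a) 1 = 0 := by
    intro a
    have hcont : Continuous (fun y : A => D (awaInr A y) (1 : WithLp 1 (Unitization ℂ A))) :=
      ((ContinuousLinearMap.apply ℂ ℂ (1 : WithLp 1 (Unitization ℂ A))).comp
        (D.comp (awaInr A))).continuous
    have h1 : Filter.Tendsto (fun j => D (awaInr A (e j * a)) 1) l0 (𝓝 (D (awaInr A a) 1)) :=
      (hcont.tendsto a).comp (hconv a).1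
    have h2 : (fun j => D (awaInr A (e j * a)) (1 : WithLp 1 (Unitization ℂ A)))
        = fun _ => (0:ℂ) := funext fun j => hψab _ _
    rw [h2] at h1
    exact tendsto_nhds_unique h1 tendsto_const_nhds
  have happ : ∀ (p q w : WithLp 1 (Unitization ℂ A)) (c : ℂ),
      D (c • p + q) w = c * D p w + D q w := by
    intro p q w c
    rw [map_add, map_smul]
    rfl
  have happ2 : ∀ (p w v : WithLp 1 (Unitization ℂ A)) (c : ℂ),
      D p (c • w + v) = c * D p w + D p v := by
    intro p w v c
    rw [map_add, map_smul]
    rfl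
  have hDfull : ∀ u w : WithLp 1 (Unitization ℂ A), D u w = d (awaSnd A u) (awaSnd A w) := by
    intro u w
    conv_lhs => rw [awaDecomp u, awaDecomp w]
    rw [happ, happ2, happ2, hone, hψ]
    simp [hd_apply]
  have hDfull' : ∀ u : WithLp 1 (Unitization ℂ A), D u = awaExtend A (d (awaSnd A u)) :=
    fun u => ContinuousLinearMap.ext fun w => hDfull u w
  refine ⟨κ, l, fun i => awaExtend A (x i), hne, fun u => ?_⟩
  show Filter.Tendsto (fun i => lact (WithLp 1 (Unitization ℂ A)) u (awaExtend A (x i))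
      - ract (WithLp 1 (Unitization ℂ A)) u (awaExtend A (x i))) l (𝓝 (D u))
  have key : (fun i => lact (WithLp 1 (Unitization ℂ A)) u (awaExtend A (x i))
      - ract (WithLp 1 (Unitization ℂ A)) u (awaExtend A (x i)))
      = fun i => awaExtend A (lact A (awaSnd A u) (x i) - ract A (awaSnd A u) (x i)) := by
    funext i
    ext w
    show x i (awaSnd A (w * u)) - x i (awaSnd A (u * w))
        = x i (awaSnd A w * awaSnd A u) - x i (awaSnd A u * awaSnd A w)
    rw [awaSnd_mul, awaSnd_mul, map_add, map_add, map_add, map_add]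
    ring
  rw [key, hDfull' u]
  exact ((awaExtend A).continuous.tendsto _).comp (hx (awaSnd A u))

lemma awa_backward (hbai : HasBAI A)
    (hB : ApproxWeaklyAmenable (WithLp 1 (Unitization ℂ A))) :
    ApproxWeaklyAmenable A := by
  intro d0 hd0
  let d : A →L[ℂ] (A →L[ℂ] ℂ) := d0
  have hd : ∀ a b : A, d (a * b) = lact A a (d b) + ract A b (d a) := hd0
  have hdval : ∀ a b x : A, d (a * b) x = d b (x * a) + d a (b * x) := by
    intro a b x; rw [hd a b]; rfl
  obtain ⟨κ0, l0, e, C, hl0, hC, hconv⟩ := hbai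
  haveI := hl0
  obtain ⟨j0⟩ : Nonempty κ0 := nonempty_of_neBot l0
  have hC0 : (0:ℝ) ≤ C := le_trans (norm_nonneg (e j0)) (hC j0)
  set U : Ultrafilter κ0 := Ultrafilter.of l0 with hU_def
  have hUle : (U : Filter κ0) ≤ l0 := Ultrafilter.of_le l0
  haveI : (U : Filter κ0).NeBot := Ultrafilter.neBot U
  set K : ℝ := ‖d‖ * C + ‖d‖ * C with hK
  have hbound : ∀ (j : κ0) (a : A), ‖d a (e j) + d (e j) a‖ ≤ K * ‖a‖ := by
    intro j a
    calc ‖d a (e j) + d (e j) a‖ ≤ ‖d a (e j)‖ + ‖d (e j) a‖ := norm_add_le _ _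
      _ ≤ ‖d a‖ * ‖e j‖ + ‖d (e j)‖ * ‖a‖ :=
          add_le_add ((d a).le_opNorm _) ((d (e j)).le_opNorm _)
      _ ≤ (‖d‖ * ‖a‖) * C + (‖d‖ * C) * ‖a‖ := by
          have h1 : ‖d a‖ * ‖e j‖ ≤ (‖d‖ * ‖a‖) * C :=
            mul_le_mul (d.le_opNorm a) (hC j) (norm_nonneg _) (by positivity)
          have h2 : ‖d (e j)‖ * ‖a‖ ≤ (‖d‖ * C) * ‖a‖ :=
            mul_le_mul_of_nonneg_right ((d.le_opNorm (e j)).trans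
              (mul_le_mul_of_nonneg_left (hC j) (norm_nonneg (d : A →L[ℂ] (A →L[ℂ] ℂ))))) (norm_nonneg a)
          exact add_le_add h1 h2
      _ = K * ‖a‖ := by rw [hK]; ring
  have hex : ∀ a : A, ∃ z : ℂ,
      Filter.Tendsto (fun j => d a (e j) + d (e j) a) (U : Filter κ0) (𝓝 z) := by
    intro a
    have hK2 : IsCompact (Metric.closedBall (0:ℂ) (K * ‖a‖)) := isCompact_closedBall _ _
    have hle : (Ultrafilter.map (fun j => d a (e j) + d (e j) a) U : Filter ℂ)
        ≤ Filter.principal (Metric.closedBall (0:ℂ) (K * ‖a‖)) := by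
      rw [Filter.le_principal_iff]
      exact Filter.mem_map.mpr (Filter.univ_mem' fun j =>
        mem_closedBall_zero_iff.mpr (hbound j a))
    obtain ⟨z, _, hz⟩ := hK2.ultrafilter_le_nhds _ hle
    exact ⟨z, hz⟩
  choose ψ0 hψ0 using hex
  have hdsm : ∀ (c : ℂ) (a b : A), d (c • a) b = c * d a b := by
    intro c a b; rw [map_smul]; rfl
  have hψadd : ∀ a b : A, ψ0 (a + b) = ψ0 a + ψ0 b := by
    intro a b
    have h2 := (hψ0 a).add (hψ0 b)
    have heq : (fun j => (d a (e j) + d (e j) a) + (d b (e j) + d (e j) b))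
        = fun j => d (a + b) (e j) + d (e j) (a + b) := by
      funext j
      rw [map_add, map_add]
      show d a (e j) + d (e j) a + (d b (e j) + d (e j) b)
          = (d a + d b) (e j) + (d (e j) a + d (e j) b)
      rw [ContinuousLinearMap.add_apply]
      ring
    rw [heq] at h2
    exact tendsto_nhds_unique (hψ0 (a + b)) h2
  have hψsmul : ∀ (c : ℂ) (a : A), ψ0 (c • a) = c * ψ0 a := by
    intro c a
    have h2 := (hψ0 a).const_mul c
    have heq : (fun j => c * (d a (e j) + d (e j) a))
        = fun j => d (c • a) (e j) + d (e j) (c • a) := by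
      funext j
      rw [hdsm, map_smul]
      show c * (d a (e j) + d (e j) a) = c * d a (e j) + c • d (e j) a
      rw [smul_eq_mul]; ring
    rw [heq] at h2
    exact tendsto_nhds_unique (hψ0 (c • a)) h2
  have hψbd : ∀ a : A, ‖ψ0 a‖ ≤ K * ‖a‖ := by
    intro a
    exact le_of_tendsto ((hψ0 a).norm) (Filter.Eventually.of_forall fun j => hbound j a)
  set ψlin : A →ₗ[ℂ] ℂ :=
    { toFun := ψ0, map_add' := hψadd,
      map_smul' := fun c a => by simpa using hψsmul c a } with hψlin
  set ψ : A →L[ℂ] ℂ := LinearMap.mkContinuous ψlin K (fun a => hψbd a) with hψdef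
  have hψ_apply : ∀ a : A, ψ a = ψ0 a := fun _ => rfl
  have hψmul : ∀ a b : A, ψ (a * b) = d a b + d b a := by
    intro a b
    have hmulel : Filter.Tendsto (fun j => e j * a) (U : Filter κ0) (𝓝 a) :=
      (hconv a).1.mono_left hUle
    have t1 : Filter.Tendsto (fun j => d b (e j * a)) (U : Filter κ0) (𝓝 (d b a)) :=
      ((d b).continuous.tendsto a).comp hmulel
    have t2 : Filter.Tendsto (fun j => d (e j * a) b) (U : Filter κ0) (𝓝 (d a b)) :=
      (((ContinuousLinearMap.apply ℂ ℂ b).comp d).continuous.tendsto a).comp hmulel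
    have hsum := t1.add t2
    have heq : (fun j => d b (e j * a) + d (e j * a) b)
        = fun j => d (a * b) (e j) + d (e j) (a * b) := by
      funext j
      have h1 : d (a * b) (e j) = d b (e j * a) + d a (b * e j) := hdval a b (e j)
      have h2 : d (e j * a) b = d a (b * e j) + d (e j) (a * b) := hdval (e j) a b
      rw [h1, h2]; ring
    rw [heq] at hsum
    rw [hψ_apply]
    rw [tendsto_nhds_unique (hψ0 (a * b)) hsum]
    ring
  set D : WithLp 1 (Unitization ℂ A) →L[ℂ] (WithLp 1 (Unitization ℂ A) →L[ℂ] ℂ) :=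
    ((ψ.comp (awaSnd A)).smulRight (awaFst A)) + (awaExtend A).comp (d.comp (awaSnd A))
    with hDdef
  have hDval : ∀ u w : WithLp 1 (Unitization ℂ A),
      D u w = ψ (awaSnd A u) * awaFst A w + d (awaSnd A u) (awaSnd A w) := by
    intro u w
    rw [hDdef]
    rw [ContinuousLinearMap.add_apply, ContinuousLinearMap.add_apply]
    rw [ContinuousLinearMap.smulRight_apply]
    rfl
  have hDder : IsDerivation (iterDual (WithLp 1 (Unitization ℂ A)) 1) D := by
    intro u v
    show D (u * v) = lact (WithLp 1 (Unitization ℂ A)) u (D v)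
        + ract (WithLp 1 (Unitization ℂ A)) v (D u)
    ext w
    show D (u * v) w = D v (w * u) + D u (v * w)
    rw [hDval, hDval, hDval]
    rw [awaSnd_mul u v, awaSnd_mul w u, awaFst_mul w u,
      awaSnd_mul v w, awaFst_mul v w]
    simp only [map_add, map_smul, ContinuousLinearMap.add_apply,
      ContinuousLinearMap.smul_apply, smul_eq_mul]
    rw [hψmul, hdval]
    ring
  obtain ⟨κ, l, X0, hne, hX0⟩ := hB D hDder
  haveI := hne
  let X : κ → (WithLp 1 (Unitization ℂ A) →L[ℂ] ℂ) := X0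
  have hX : ∀ u : WithLp 1 (Unitization ℂ A),
      Filter.Tendsto (fun i => lact (WithLp 1 (Unitization ℂ A)) u (X i)
        - ract (WithLp 1 (Unitization ℂ A)) u (X i)) l (𝓝 (D u)) := hX0
  refine ⟨κ, l, fun i => awaRestrict A (X i), hne, fun a => ?_⟩
  show Filter.Tendsto (fun i => lact A a (awaRestrict A (X i))
      - ract A a (awaRestrict A (X i))) l (𝓝 (d a))
  have key : (fun i => lact A a (awaRestrict A (X i)) - ract A a (awaRestrict A (X i)))
      = fun i => awaRestrict A (lact (WithLp 1 (Unitization ℂ A)) (awaInr A a) (X i)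
        - ract (WithLp 1 (Unitization ℂ A)) (awaInr A a) (X i)) := by
    funext i
    ext b
    show X i (awaInr A (b * a)) - X i (awaInr A (a * b))
        = X i (awaInr A b * awaInr A a) - X i (awaInr A a * awaInr A b)
    rw [awaInr_mul, awaInr_mul]
  have hDa : awaRestrict A (D (awaInr A a)) = d a := by
    ext b
    show D (awaInr A a) (awaInr A b) = d a b
    rw [hDval]
    simp
  rw [key, ← hDa]
  exact ((awaRestrict A).continuous.tendsto _).comp (hX (awaInr A a))

end MainAWA


/-- For a non-unital Banach algebra `A` with a bounded approximate identity, `A`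
is approximately weakly amenable iff its unitization `A#` is. -/
theorem approxWeaklyAmenable_iff_unitization
    (hnu : ¬ ∃ e : A, ∀ a : A, e * a = a ∧ a * e = a)
    (hbai : HasBAI A) :
    ApproxWeaklyAmenable A ↔ ApproxWeaklyAmenable (WithLp 1 (Unitization ℂ A)) :=
  ⟨fun h => awa_forward hbai h, fun h => awa_backward hbai h⟩
end

section
/- Let A be a non-unital Banach algebra. Then A is approximately cyclic amenable if and only if its unitization A# is approximately cyclic amenable. -/
open ContinuousLinearMap Filter Topology

open ContinuousLinearMap Filter Topology

variable {A : Type} [NonUnitalNormedRing A] [NormedSpace ℂ A]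

variable (A) [IsScalarTower ℂ A A] [SMulCommClass ℂ A A] [CompleteSpace A]

variable {A}

variable (A)

variable (A : Type) [NonUnitalNormedRing A] [NormedSpace ℂ A]
  [IsScalarTower ℂ A A] [SMulCommClass ℂ A A] [CompleteSpace A]

section UnitizationHelpers

set_option linter.unusedSectionVars false
set_option maxHeartbeats 1000000
set_option synthInstance.maxHeartbeats 400000
variable {A}

noncomputable def uproj : WithLp 1 (Unitization ℂ A) →L[ℂ] A :=
  LinearMap.mkContinuous
    ((Unitization.sndHom ℂ ℂ A).comp (WithLp.linearEquiv 1 ℂ (Unitization ℂ A)).toLinearMap) 1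
    (fun x => by
      rw [one_mul, WithLp.unitization_norm_def]
      exact le_add_of_nonneg_left (norm_nonneg _))

noncomputable def uincl : A →L[ℂ] WithLp 1 (Unitization ℂ A) :=
  LinearMap.mkContinuous
    (((WithLp.linearEquiv 1 ℂ (Unitization ℂ A)).symm : _ →ₗ[ℂ] _).comp
      (Unitization.inrHom ℂ ℂ A)) 1
    (fun a => by rw [one_mul]; exact (WithLp.unitization_norm_inr a).le)

noncomputable def ufst (x : WithLp 1 (Unitization ℂ A)) : ℂ :=
  (WithLp.equiv 1 (Unitization ℂ A) x).fst

lemma uproj_apply (x : WithLp 1 (Unitization ℂ A)) :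
    uproj x = (WithLp.equiv 1 (Unitization ℂ A) x).snd := rfl

lemma equiv_uincl (a : A) :
    WithLp.equiv 1 (Unitization ℂ A) (uincl a) = Unitization.inr a := rfl

lemma uproj_uincl (a : A) : uproj (uincl a) = a := rfl

lemma uincl_mul (a b : A) : uincl (a * b) = (uincl a) * (uincl b) := by
  apply (WithLp.equiv 1 (Unitization ℂ A)).injective
  rw [show ∀ u v : WithLp 1 (Unitization ℂ A), WithLp.equiv 1 _ (u * v) = WithLp.equiv 1 _ u * WithLp.equiv 1 _ v from fun _ _ => rfl,
    equiv_uincl, equiv_uincl, equiv_uincl, Unitization.inr_mul]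

lemma uproj_mul (x y : WithLp 1 (Unitization ℂ A)) :
    uproj (x * y) = ufst x • uproj y + ufst y • uproj x + uproj x * uproj y := by
  simp only [uproj_apply, WithLp.equiv_apply, WithLp.unitization_mul, Unitization.snd_mul, ufst]

lemma udecomp (x : WithLp 1 (Unitization ℂ A)) :
    x = ufst x • (1 : WithLp 1 (Unitization ℂ A)) + uincl (uproj x) := by
  apply (WithLp.equiv 1 (Unitization ℂ A)).injective
  rw [show ∀ u v : WithLp 1 (Unitization ℂ A), WithLp.equiv 1 _ (u + v) = WithLp.equiv 1 _ u + WithLp.equiv 1 _ v from fun _ _ => rfl,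
    show ∀ (c : ℂ) (u : WithLp 1 (Unitization ℂ A)), WithLp.equiv 1 _ (c • u) = c • WithLp.equiv 1 _ u from fun _ _ => rfl, equiv_uincl]
  have h1 : (WithLp.equiv 1 (Unitization ℂ A)) (1 : WithLp 1 (Unitization ℂ A)) = 1 := rfl
  apply Unitization.ext
  · simp [ufst, uproj_apply, h1]
  · simp [ufst, uproj_apply, h1]

noncomputable def dres :
    (WithLp 1 (Unitization ℂ A) →L[ℂ] ℂ) →L[ℂ] (A →L[ℂ] ℂ) :=
  (compL ℂ A (WithLp 1 (Unitization ℂ A)) ℂ).flip uincl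

noncomputable def dext :
    (A →L[ℂ] ℂ) →L[ℂ] (WithLp 1 (Unitization ℂ A) →L[ℂ] ℂ) :=
  (compL ℂ (WithLp 1 (Unitization ℂ A)) A ℂ).flip uproj

lemma dres_apply (F : WithLp 1 (Unitization ℂ A) →L[ℂ] ℂ) (b : A) :
    dres F b = F (uincl b) := rfl

lemma dext_apply (f : A →L[ℂ] ℂ) (y : WithLp 1 (Unitization ℂ A)) :
    dext f y = f (uproj y) := rfl

lemma commS (x : WithLp 1 (Unitization ℂ A)) (f : A →L[ℂ] ℂ) :
    lact (WithLp 1 (Unitization ℂ A)) x (dext f) - ract (WithLp 1 (Unitization ℂ A)) x (dext f)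
      = dext (lact A (uproj x) f - ract A (uproj x) f) := by
  ext y
  have L : (lact (WithLp 1 (Unitization ℂ A)) x (dext f)
      - ract (WithLp 1 (Unitization ℂ A)) x (dext f)) y
      = f (uproj (y * x)) - f (uproj (x * y)) := rfl
  have R : (dext (lact A (uproj x) f - ract A (uproj x) f)) y
      = f (uproj y * uproj x) - f (uproj x * uproj y) := rfl
  rw [L, R, ← map_sub f, ← map_sub f]
  congr 1
  rw [uproj_mul, uproj_mul]
  abel

lemma commR (a : A) (F : WithLp 1 (Unitization ℂ A) →L[ℂ] ℂ) :
    lact A a (dres F) - ract A a (dres F)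
      = dres (lact (WithLp 1 (Unitization ℂ A)) (uincl a) F
          - ract (WithLp 1 (Unitization ℂ A)) (uincl a) F) := by
  ext b
  have L : (lact A a (dres F) - ract A a (dres F)) b
      = F (uincl (b * a)) - F (uincl (a * b)) := rfl
  have R : (dres (lact (WithLp 1 (Unitization ℂ A)) (uincl a) F
      - ract (WithLp 1 (Unitization ℂ A)) (uincl a) F)) b
      = F (uincl b * uincl a) - F (uincl a * uincl b) := rfl
  rw [L, R, uincl_mul, uincl_mul]

end UnitizationHelpers


set_option maxHeartbeats 1000000 in
set_option synthInstance.maxHeartbeats 400000 in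
/-- A non-unital Banach algebra `A` is approximately cyclic amenable iff its
unitization `A#` is approximately cyclic amenable. -/
theorem approxCyclicAmenable_iff_unitization
    (hnu : ¬ ∃ e : A, ∀ a : A, e * a = a ∧ a * e = a) :
    ApproxCyclicAmenable A ↔ ApproxCyclicAmenable (WithLp 1 (Unitization ℂ A)) := by
  constructor
  · intro hA D hder hcyc
    have h1 : D 1 = 0 := by
      have h := hder 1 1
      rw [mul_one] at h
      have hl : lact (WithLp 1 (Unitization ℂ A)) 1 (D 1) = D 1 := by
        ext y; simp [lact, comp_apply, flip_apply, mul_apply']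
      have hr : ract (WithLp 1 (Unitization ℂ A)) 1 (D 1) = D 1 := by
        ext y; simp [ract, comp_apply, flip_apply, mul_apply']
      rw [hl, hr] at h
      exact left_eq_add.mp h
    have hu1 : ∀ u, D u 1 = 0 := by
      intro u
      have h := hcyc u 1
      rw [h1] at h
      simpa using h
    set d : A →L[ℂ] (A →L[ℂ] ℂ) := dres.comp (D.comp uincl) with hd
    have hdab : ∀ a b : A, d a b = D (uincl a) (uincl b) := fun _ _ => rfl
    have hder' : ∀ a b : A, d (a * b) = lact A a (d b) + ract A b (d a) := by
      intro a b
      ext c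
      have h3 := congrArg (fun g : _ →L[ℂ] ℂ => g (uincl c)) (hder (uincl a) (uincl b))
      simp only [lact, ract, ContinuousLinearMap.add_apply, comp_apply, flip_apply,
        mul_apply'] at h3 ⊢
      rw [hdab, hdab, hdab, uincl_mul, uincl_mul, uincl_mul]
      exact h3
    have hcyc' : ∀ a b : A, d a b + d b a = 0 := fun a b => hcyc (uincl a) (uincl b)
    obtain ⟨ι, l, f, hne, hf⟩ := hA d hder' hcyc'
    refine ⟨ι, l, fun i => dext (f i), hne, ?_⟩
    intro x
    have hDx : D x = dext (d (uproj x)) := by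
      ext y
      have e1 : D x y = D (uincl (uproj x)) y := by
        conv_lhs => rw [udecomp x]
        rw [map_add, ContinuousLinearMap.add_apply, map_smul,
          ContinuousLinearMap.smul_apply, h1, ContinuousLinearMap.zero_apply,
          smul_zero, zero_add]
      rw [e1, dext_apply]
      conv_lhs => rw [udecomp y]
      rw [map_add, map_smul, hu1, smul_zero, zero_add]
      exact (hdab _ _).symm
    rw [hDx]
    have key := (dext.continuous.tendsto (d (uproj x))).comp (hf (uproj x))
    have heq : (fun i => lact (WithLp 1 (Unitization ℂ A)) x (dext (f i))
        - ract (WithLp 1 (Unitization ℂ A)) x (dext (f i)))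
        = fun i => dext (lact A (uproj x) (f i) - ract A (uproj x) (f i)) :=
      funext fun i => commS x (f i)
    rw [heq]
    exact key
  · intro hB d hder hcyc
    set D : WithLp 1 (Unitization ℂ A) →L[ℂ] (WithLp 1 (Unitization ℂ A) →L[ℂ] ℂ) :=
      dext.comp (d.comp uproj) with hD
    have hDxy : ∀ x y, D x y = d (uproj x) (uproj y) := fun _ _ => rfl
    have hderB : ∀ x y, D (x * y)
        = lact (WithLp 1 (Unitization ℂ A)) x (D y)
          + ract (WithLp 1 (Unitization ℂ A)) y (D x) := by
      intro x y
      ext z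
      have h3 := congrArg (fun g : _ →L[ℂ] ℂ => g (uproj z)) (hder (uproj x) (uproj y))
      simp only [lact, ract, ContinuousLinearMap.add_apply, comp_apply, flip_apply,
        mul_apply'] at h3 ⊢
      rw [hDxy, hDxy, hDxy]
      simp only [uproj_mul, map_add, map_smul, ContinuousLinearMap.add_apply,
        ContinuousLinearMap.smul_apply, smul_eq_mul]
      linear_combination h3 - ufst z * hcyc (uproj x) (uproj y)
    have hcycB : ∀ x y, D x y + D y x = 0 := fun x y => hcyc (uproj x) (uproj y)
    obtain ⟨ι, l, F, hne, hF⟩ := hB D hderB hcycB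
    refine ⟨ι, l, fun i => dres (F i), hne, ?_⟩
    intro a
    have hda : d a = dres (D (uincl a)) := by ext b; rfl
    rw [hda]
    have key := (dres.continuous.tendsto (D (uincl a))).comp (hF (uincl a))
    have heq : (fun i => lact A a (dres (F i)) - ract A a (dres (F i)))
        = fun i => dres (lact (WithLp 1 (Unitization ℂ A)) (uincl a) (F i)
            - ract (WithLp 1 (Unitization ℂ A)) (uincl a) (F i)) :=
      funext fun i => commR a (F i)
    rw [heq]
    exact key
end

section
/- Let B be a closed subalgebra and I a closed ideal of a Banach algebra A such that A = B ⊕ I (Banach space direct sum). If A is approximately weakly amenable, then B is approximately weakly amenable; likewise, if A is approximately cyclic amenable, then B is approximately cyclic amenable. -/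
open ContinuousLinearMap Filter Topology

open ContinuousLinearMap Filter Topology

variable {A : Type} [NonUnitalNormedRing A] [NormedSpace ℂ A]

variable (A) [IsScalarTower ℂ A A] [SMulCommClass ℂ A A] [CompleteSpace A]

variable {A}

variable (A)

variable (A : Type) [NonUnitalNormedRing A] [NormedSpace ℂ A]
  [IsScalarTower ℂ A A] [SMulCommClass ℂ A A] [CompleteSpace A]

noncomputable instance nonUnitalSubalgebraNormedSpaceComplex {E : Type} [NonUnitalNormedRing E]
    [NormedSpace ℂ E] (s : NonUnitalSubalgebra ℂ E) : NormedSpace ℂ s :=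
  SubmoduleClass.toNormedSpace s

set_option maxHeartbeats 2000000 in
/-- If `A = B ⊕ I` with `B` a closed subalgebra and `I` a closed ideal, then
approximate weak (resp. cyclic) amenability of `A` passes to `B`. -/
theorem subalgebra_approxWeaklyAmenable_of_direct_sum
    (B : NonUnitalSubalgebra ℂ A) (hBclosed : IsClosed (B : Set A))
    [CompleteSpace ↥B]
    (I : NonUnitalSubalgebra ℂ A) (hIclosed : IsClosed (I : Set A))
    (hl : ∀ (a x : A), x ∈ I → a * x ∈ I) (hr : ∀ (a x : A), x ∈ I → x * a ∈ I)
    (hcompl : IsCompl B.toSubmodule I.toSubmodule) :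
    (ApproxWeaklyAmenable A → ApproxWeaklyAmenable ↥B) ∧
    (ApproxCyclicAmenable A → ApproxCyclicAmenable ↥B) := by

  classical
  set P : A →L[ℂ] ↥B :=
    B.toSubmodule.linearProjOfClosedCompl I.toSubmodule hcompl hBclosed hIclosed with hPdef
  have hPcoe : ⇑P = B.toSubmodule.linearProjOfIsCompl I.toSubmodule hcompl :=
    Submodule.coe_continuous_linearProjOfClosedCompl' hcompl hBclosed hIclosed
  have hPb : ∀ b : ↥B, P (b : A) = b := fun b => by
    rw [hPcoe]; exact Submodule.linearProjOfIsCompl_apply_left hcompl b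
  have hPI : ∀ x : A, x ∈ I → P x = 0 := fun x hx => by
    rw [hPcoe]; exact Submodule.projectionOnto_apply_of_mem_right hcompl hx
  have hPmul : ∀ a c : A, P (a * c) = P a * P c := by
    intro a c
    have hdecomp : ∀ z : A, z ∈ B.toSubmodule ⊔ I.toSubmodule := by
      rw [hcompl.sup_eq_top]; intro z; trivial
    obtain ⟨ba, hba, ia, hia, ha⟩ := Submodule.mem_sup.1 (hdecomp a)
    obtain ⟨bc, hbc, ic, hic, hc⟩ := Submodule.mem_sup.1 (hdecomp c)
    have hrest : ba * ic + ia * bc + ia * ic ∈ I := by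
      exact add_mem (add_mem (hl _ _ hic) (hr _ _ hia)) (hl _ _ hic)
    have hmul : a * c = ba * bc + (ba * ic + ia * bc + ia * ic) := by
      rw [← ha, ← hc]; noncomm_ring
    have h1 : P a = ⟨ba, hba⟩ := by
      rw [← ha, map_add, hPb ⟨ba, hba⟩, hPI ia hia, add_zero]
    have h2 : P c = ⟨bc, hbc⟩ := by
      rw [← hc, map_add, hPb ⟨bc, hbc⟩, hPI ic hic, add_zero]
    have h3 : P (a * c) = ⟨ba * bc, mul_mem hba hbc⟩ := by
      rw [hmul, map_add, hPb ⟨ba * bc, mul_mem hba hbc⟩, hPI _ hrest, add_zero]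
    rw [h1, h2, h3]; ext; simp
  set R : (A →L[ℂ] ℂ) →L[ℂ] (↥B →L[ℂ] ℂ) :=
    (compL ℂ ↥B A ℂ).flip B.toSubmodule.subtypeL with hRdef
  have hR : ∀ (f : A →L[ℂ] ℂ) (b : ↥B), R f b = f (b : A) := fun f b => rfl
  -- the extension construction and its properties, shared by both parts
  have main : ∀ D : ↥B →L[ℂ] (↥B →L[ℂ] ℂ),
      (∀ a b : ↥B, D (a * b) = lact ↥B a (D b) + ract ↥B b (D a)) →
      ∃ Dt : A →L[ℂ] (A →L[ℂ] ℂ),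
        (∀ a x : A, Dt a x = D (P a) (P x)) ∧
        (∀ a c : A, Dt (a * c) = lact A a (Dt c) + ract A c (Dt a)) ∧
        (∀ b : ↥B, R (Dt (b : A)) = D b) ∧
        (∀ (b : ↥B) (f : A →L[ℂ] ℂ),
          R (lact A (b : A) f - ract A (b : A) f) = lact ↥B b (R f) - ract ↥B b (R f)) := by
    intro D hder
    refine ⟨((compL ℂ A ↥B ℂ).flip P).comp (D.comp P), fun a x => rfl, ?_, ?_, ?_⟩
    · intro a c
      ext x
      have l1 : (((compL ℂ A ↥B ℂ).flip P).comp (D.comp P)) (a * c) x = D (P (a * c)) (P x) := rfl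
      have l2 : (lact A a ((((compL ℂ A ↥B ℂ).flip P).comp (D.comp P)) c)
          + ract A c ((((compL ℂ A ↥B ℂ).flip P).comp (D.comp P)) a)) x
          = D (P c) (P (x * a)) + D (P a) (P (c * x)) := rfl
      rw [l1, l2, hPmul, hder, hPmul, hPmul]
      rfl
    · intro b
      ext c
      have : (((compL ℂ A ↥B ℂ).flip P).comp (D.comp P)) (b : A) (c : A) = D (P (b:A)) (P (c:A)) := rfl
      rw [hR, this, hPb, hPb]
    · intro b f
      ext c
      rw [hR]
      simp only [ContinuousLinearMap.sub_apply, lact, ract, comp_apply, flip_apply,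
        mul_apply', hR, MulMemClass.coe_mul]
  have hlact : ∀ (X : Type) [inst : NonUnitalNormedRing X] [inst2 : NormedSpace ℂ X]
      [inst3 : IsScalarTower ℂ X X] [inst4 : SMulCommClass ℂ X X] [inst5 : CompleteSpace X]
      (a : X) (f : X →L[ℂ] ℂ), (iterDual X 1).lsmul a f = lact X a f := by
    intro X _ _ _ _ _ a f; rfl
  constructor
  · intro hA D hD
    obtain ⟨Dt, hDt, hDtDer, hRDt, hRact⟩ := main D (fun a b => hD a b)
    obtain ⟨ι, l, x, hl', hx⟩ := hA Dt (fun a c => hDtDer a c)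
    refine ⟨ι, l, fun i => R (x i), hl', fun b => ?_⟩
    have h1 := ((R.continuous.tendsto (Dt (b : A))).comp (hx (b : A)))
    replace h1 : Tendsto (fun i => R ((iterDual A 1).lsmul (b:A) (x i) - (iterDual A 1).rsmul (b:A) (x i)))
        l (𝓝 (R (Dt (b : A)))) := h1
    have e1 : (fun i => R ((iterDual A 1).lsmul (b:A) (x i) - (iterDual A 1).rsmul (b:A) (x i)))
        = fun i => (iterDual ↥B 1).lsmul b (R (x i)) - (iterDual ↥B 1).rsmul b (R (x i)) := by
      funext i; exact hRact b (x i)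
    rw [e1, hRDt] at h1
    exact h1
  · intro hA D hder hcyc
    obtain ⟨Dt, hDt, hDtDer, hRDt, hRact⟩ := main D hder
    have hDtcyc : ∀ a c : A, Dt a c + Dt c a = 0 := by
      intro a c; rw [hDt, hDt]; exact hcyc (P a) (P c)
    obtain ⟨ι, l, x, hl', hx⟩ := hA Dt hDtDer hDtcyc
    refine ⟨ι, l, fun i => R (x i), hl', fun b => ?_⟩
    have h1 := ((R.continuous.tendsto (Dt (b : A))).comp (hx (b : A)))
    simp only [Function.comp_def] at h1
    have e1 : (fun i => R (lact A (b:A) (x i) - ract A (b:A) (x i)))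
        = fun i => lact ↥B b (R (x i)) - ract ↥B b (R (x i)) := by
      funext i; exact hRact b (x i)
    rw [e1, hRDt] at h1
    exact h1
end
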